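/- arXiv:nlin/0212001 — 4 statements merged into one kernel-verified Lean document; each statement's English description precedes it below -/
import Mathlib

section
/- If D is a real number with D > 1, then the sum Ω^D := Σ_{p ∈ dom U} 2^{−|p|/D} diverges to infinity. -/
open scoped ENNReal MeasureTheory

/-- Finite binary strings. -/
abbrev BStr := List Bool

/-- A set of strings is prefix-free if no element is a proper prefix of another element. -/
def PrefixFree (S : Set BStr) : Prop :=
  ∀ p ∈ S, ∀ q ∈ S, p <+: q → p = q

/-- A computer: a partial recursive function on finite binary strings
whose domain is a prefix-free set. -/
structure Computer where
  f : BStr →. BStr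
  partrec : Partrec f
  prefixFree : PrefixFree f.Dom

/-- `U` is a universal computer: for every computer `C` there is a simulation
constant `sim` such that whenever `C p` is defined there is `q` with
`U q = C p` and `|q| ≤ |p| + sim`. -/
def IsUniversal (U : Computer) : Prop :=
  ∀ C : Computer, ∃ sim : ℕ, ∀ p y : BStr, C.f p = Part.some y →
    ∃ q : BStr, U.f q = Part.some y ∧ q.length ≤ p.length + sim

/-- Kolmogorov complexity relative to a computer `U`:
minimal length of a program producing `s`. -/
noncomputable def Kc (U : Computer) (s : BStr) : ℕ :=
  sInf { k | ∃ p : BStr, U.f p = Part.some s ∧ p.length = k }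

/-- The prefix of length `n` of an infinite binary sequence. -/
def pre (α : ℕ → Bool) (n : ℕ) : BStr := (List.range n).map α

/-- A real number is computable if the base-two expansion of `D mod 1` is
generated by a total recursive function. -/
def ComputableReal (D : ℝ) : Prop :=
  ∃ f : ℕ → Bool, Computable f ∧
    Int.fract D = ∑' n : ℕ, (if f n then (1 : ℝ) else 0) / 2 ^ (n + 1)

/-- `α` is weakly Chaitin `D`-random: `∃ c, ∀ n, D·n − c ≤ H(α_n)`. -/
def WeaklyChaitinRandom (U : Computer) (D : ℝ) (α : ℕ → Bool) : Prop :=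
  ∃ c : ℝ, ∀ n : ℕ, D * n - c ≤ (Kc U (pre α n) : ℝ)

/-- `α` is Chaitin `D`-random: `H(α_n) − D·n → ∞`. -/
def ChaitinRandom (U : Computer) (D : ℝ) (α : ℕ → Bool) : Prop :=
  Filter.Tendsto (fun n : ℕ => (Kc U (pre α n) : ℝ) - D * n) Filter.atTop Filter.atTop

/-- `α` is semi `D`-random: `D ≤ liminf H(α_n)/n`. -/
def SemiRandom (U : Computer) (D : ℝ) (α : ℕ → Bool) : Prop :=
  D ≤ Filter.liminf (fun n : ℕ => (Kc U (pre α n) : ℝ) / n) Filter.atTop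

/-- `α` is `D`-compressible: `limsup H(α_n)/n ≤ D`. -/
def Compressible (U : Computer) (D : ℝ) (α : ℕ → Bool) : Prop :=
  Filter.limsup (fun n : ℕ => (Kc U (pre α n) : ℝ) / n) Filter.atTop ≤ D

/-- A Martin-Löf `D`-test: an r.e. subset `T` of `ℕ × X` with
`Σ_{s ∈ T_i} 2^{−D|s|} ≤ 2^{−i}` for every `i`. -/
def MLTest (D : ℝ) (T : Set (ℕ × BStr)) : Prop :=
  REPred (· ∈ T) ∧
    ∀ i : ℕ, (∑' s : { s : BStr // (i, s) ∈ T }, (2 : ℝ≥0∞) ^ (-(D * (s.1.length : ℝ))))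
      ≤ (2 : ℝ≥0∞) ^ (-(i : ℝ))

/-- `α` is Martin-Löf `D`-random: for every Martin-Löf `D`-test there is a
level `i` such that no prefix of `α` lies in `T_i`. -/
def MLRandom (D : ℝ) (α : ℕ → Bool) : Prop :=
  ∀ T : Set (ℕ × BStr), MLTest D T → ∃ i : ℕ, ∀ n : ℕ, (i, pre α n) ∉ T

/-- A Solovay `D`-test: an r.e. subset `T` of `ℕ × X` with
`Σ_{(i,s) ∈ T} 2^{−D|s|} < ∞`. -/
def SolovayTest (D : ℝ) (T : Set (ℕ × BStr)) : Prop :=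
  REPred (· ∈ T) ∧
    (∑' x : T, (2 : ℝ≥0∞) ^ (-(D * ((x : ℕ × BStr).2.length : ℝ)))) < ⊤

/-- `α` is Solovay `D`-random: for every Solovay `D`-test, only finitely many
levels `i` contain a prefix of `α`. -/
def SolovayRandom (D : ℝ) (α : ℕ → Bool) : Prop :=
  ∀ T : Set (ℕ × BStr), SolovayTest D T →
    ∃ m : ℕ, ∀ i > m, ∀ n : ℕ, (i, pre α n) ∉ T

/-- The generalized halting probability `Ω^D = Σ_{p ∈ dom U} 2^{−|p|/D}`. -/
noncomputable def OmegaD (U : Computer) (D : ℝ) : ℝ :=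
  ∑' p : U.f.Dom, (2 : ℝ) ^ (-((p : BStr).length : ℝ) / D)

/-- The `n`-th digit (starting from `n = 0`) of the base-two expansion of
`x mod 1`, chosen with infinitely many zeros (the non-terminating-in-ones
expansion). -/
noncomputable def binExp (x : ℝ) (n : ℕ) : Bool :=
  decide (⌊Int.fract x * 2 ^ (n + 1)⌋ % 2 = 1)

/-- `code_N(x)`: the infinite binary sequence obtained by interleaving the
base-two expansions (with infinitely many zeros) of the fractional parts of
the `N` coordinates of `x`. -/
noncomputable def codeSeq (N : ℕ) (hN : 0 < N) (x : EuclideanSpace ℝ (Fin N)) (n : ℕ) : Bool :=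
  binExp (x ⟨n % N, Nat.mod_lt n hN⟩) (n / N)

/-- `D` is the 1st algorithmic dimension of `F ⊆ ℝ^N`. -/
def IsDimA1 (U : Computer) (N : ℕ) (hN : 0 < N) (F : Set (EuclideanSpace ℝ (Fin N)))
    (D : ℝ) : Prop :=
  (∀ x ∈ F, Compressible U (D / N) (codeSeq N hN x)) ∧
    ∃ x ∈ F, ChaitinRandom U (D / N) (codeSeq N hN x)

/-- `D` is the 2nd algorithmic dimension of `F ⊆ ℝ^N`. -/
def IsDimA2 (U : Computer) (N : ℕ) (hN : 0 < N) (F : Set (EuclideanSpace ℝ (Fin N)))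
    (D : ℝ) : Prop :=
  (∀ x ∈ F, Compressible U (D / N) (codeSeq N hN x)) ∧
    ∃ x ∈ F, WeaklyChaitinRandom U (D / N) (codeSeq N hN x)

/-- `D` is the 3rd algorithmic dimension of `F ⊆ ℝ^N`. -/
def IsDimA3 (U : Computer) (N : ℕ) (hN : 0 < N) (F : Set (EuclideanSpace ℝ (Fin N)))
    (D : ℝ) : Prop :=
  (∀ x ∈ F, Compressible U (D / N) (codeSeq N hN x)) ∧
    ∃ x ∈ F, SemiRandom U (D / N) (codeSeq N hN x)

/-- `D` is the 4th algorithmic dimension of `F ⊆ ℝ^N`. -/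
def IsDimA4 (U : Computer) (N : ℕ) (hN : 0 < N) (F : Set (EuclideanSpace ℝ (Fin N)))
    (D : ℝ) : Prop :=
  (∀ x ∈ F, Compressible U (D / N) (codeSeq N hN x)) ∧
    ∀ d : ℝ, d < D / N → ∃ x ∈ F, ChaitinRandom U d (codeSeq N hN x)

/-- One-dimensional versions of the algorithmic dimensions, for `F ⊆ ℝ`,
where a real `x` is identified with the base-two expansion of `x mod 1`. -/
def IsDimA1R (U : Computer) (F : Set ℝ) (D : ℝ) : Prop :=
  (∀ x ∈ F, Compressible U D (binExp x)) ∧ ∃ x ∈ F, ChaitinRandom U D (binExp x)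

def IsDimA2R (U : Computer) (F : Set ℝ) (D : ℝ) : Prop :=
  (∀ x ∈ F, Compressible U D (binExp x)) ∧ ∃ x ∈ F, WeaklyChaitinRandom U D (binExp x)

def IsDimA3R (U : Computer) (F : Set ℝ) (D : ℝ) : Prop :=
  (∀ x ∈ F, Compressible U D (binExp x)) ∧ ∃ x ∈ F, SemiRandom U D (binExp x)

def IsDimA4R (U : Computer) (F : Set ℝ) (D : ℝ) : Prop :=
  (∀ x ∈ F, Compressible U D (binExp x)) ∧
    ∀ d : ℝ, d < D → ∃ x ∈ F, ChaitinRandom U d (binExp x)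

/-- The real number `0.s` determined by a finite binary string `s`. -/
noncomputable def strVal : BStr → ℝ
  | [] => 0
  | b :: t => ((if b then 1 else 0) + strVal t) / 2

/-- The real number `0.q₀q₁q₂⋯` obtained by concatenating the strings
`q 0, q 1, q 2, …` after the binary point. -/
noncomputable def concatVal (q : ℕ → BStr) : ℝ :=
  ∑' i : ℕ, strVal (q i) * (2 : ℝ) ^ (-(∑ j ∈ Finset.range i, (q j).length : ℤ))

/-- The halting self-similar set `F_halt`. -/
def Fhalt (U : Computer) : Set ℝ :=
  { x | ∃ q : ℕ → BStr, (∀ i, q i ∈ U.f.Dom) ∧ x = concatVal q }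

/-- The set `F_opt(f, W)` for an optimal code `f`. -/
def Fopt (f : BStr → BStr) (W : Set BStr) : Set ℝ :=
  { x | ∃ s : ℕ → BStr, (∀ i, s i ∈ W) ∧ x = concatVal fun i => f (s i) }

/-- The set `F_halt(W)`. -/
def FhaltW (U : Computer) (W : Set BStr) : Set ℝ :=
  { x | ∃ q : ℕ → BStr, (∀ i, ∃ w ∈ W, U.f (q i) = Part.some w) ∧ x = concatVal q }

/-- The dyadic interval `I(s) = [0.s, 0.s + 2^{−|s|})`. -/
def Ival (s : BStr) : Set ℝ :=
  Set.Ico (strVal s) (strVal s + 2 ^ (-(s.length : ℤ)))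

/-- The enlarged interval `Î(s) = [0.s − 2^{−|s|}, 0.s + 2·2^{−|s|}) mod 1`. -/
def IvalHat (s : BStr) : Set ℝ :=
  Int.fract '' Set.Ico (strVal s - 2 ^ (-(s.length : ℤ)))
    (strVal s + 2 * 2 ^ (-(s.length : ℤ)))

/-- `𝔐(F)`: tuples of equal-length strings whose dyadic box meets `F mod 1`. -/
def MM (N : ℕ) (F : Set (EuclideanSpace ℝ (Fin N))) : Set (Fin N → BStr) :=
  { s | (∀ i j, (s i).length = (s j).length) ∧
      ∃ x ∈ F, ∀ i, Int.fract (x i) ∈ Ival (s i) }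

/-- `𝔐̂(F)`: tuples of equal-length strings whose enlarged box meets `F mod 1`. -/
def MMhat (N : ℕ) (F : Set (EuclideanSpace ℝ (Fin N))) : Set (Fin N → BStr) :=
  { s | (∀ i j, (s i).length = (s j).length) ∧
      ∃ x ∈ F, ∀ i, Int.fract (x i) ∈ IvalHat (s i) }

/-- `F` satisfies the r.e. condition: some r.e. set `L` is squeezed between
`𝔐(F)` and `𝔐̂(F)`. -/
def REcond (N : ℕ) (F : Set (EuclideanSpace ℝ (Fin N))) : Prop :=
  ∃ L : Set (Fin N → BStr), REPred (· ∈ L) ∧ MM N F ⊆ L ∧ L ⊆ MMhat N F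

/-- `N_δ(F)`: the smallest number of closed balls of radius `δ` that cover `F`. -/
noncomputable def coverNum {X : Type*} [MetricSpace X] (F : Set X) (δ : ℝ) : ℕ :=
  sInf { m | ∃ t : Finset X, t.card = m ∧ F ⊆ ⋃ c ∈ t, Metric.closedBall c δ }

/-- The upper box-counting dimension of `F`. -/
noncomputable def dimBsup {X : Type*} [MetricSpace X] (F : Set X) : ℝ :=
  Filter.limsup (fun δ : ℝ => Real.log (coverNum F δ) / (-Real.log δ)) (nhdsWithin 0 (Set.Ioi 0))

namespace OmegaDAux

/-- `2 ^ k` implemented by iteration (for easy primitive recursiveness). -/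
def pow2 : ℕ → ℕ := fun k => (fun n => 2 * n)^[k] 1

lemma pow2_eq (k : ℕ) : pow2 k = 2 ^ k := by
  induction k with
  | zero => rfl
  | succ n ih =>
    unfold pow2 at *
    rw [Function.iterate_succ_apply', ih, pow_succ]
    ring

/-- `List.drop` implemented by iterating `List.tail`. -/
def dropIt (n : ℕ) (l : BStr) : BStr := (@List.tail Bool)^[n] l

lemma dropIt_eq (n : ℕ) (l : BStr) : dropIt n l = l.drop n := by
  induction n generalizing l with
  | zero => rfl
  | succ m ih =>
    unfold dropIt at *
    rw [Function.iterate_succ_apply, ih, ← List.drop_one, List.drop_drop, Nat.add_comm]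

/-- The decoding function of our auxiliary computer: a string of the form
`0^k 1 s` with `|s| = 2^k` is mapped to `s`. -/
def Cfun (p : BStr) : Option BStr :=
  if p.length = p.idxOf true + 1 + pow2 (p.idxOf true) then
    some (dropIt (p.idxOf true + 1) p)
  else none

lemma Cfun_primrec : Primrec Cfun := by
  have hk : Primrec fun p : BStr => p.idxOf true :=
    Primrec.list_idxOf.comp (Primrec.const true) Primrec.id
  have hpow : Primrec fun p : BStr => pow2 (p.idxOf true) :=
    Primrec.nat_iterate hk (Primrec.const 1)
      ((Primrec.nat_double.comp Primrec.snd).to₂)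
  have hdrop : Primrec fun p : BStr => dropIt (p.idxOf true + 1) p :=
    Primrec.nat_iterate (Primrec.succ.comp hk) Primrec.id
      ((Primrec.list_tail.comp Primrec.snd).to₂)
  have hrhs : Primrec fun p : BStr => p.idxOf true + 1 + pow2 (p.idxOf true) :=
    Primrec.nat_add.comp (Primrec.succ.comp hk) hpow
  have hcond : PrimrecPred fun p : BStr =>
      p.length = p.idxOf true + 1 + pow2 (p.idxOf true) :=
    Primrec.eq.comp Primrec.list_length hrhs
  exact Primrec.ite hcond (Primrec.option_some.comp hdrop) (Primrec.const none)

/-- Our auxiliary computer. -/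
noncomputable def C : Computer where
  f := fun p => (Cfun p : Part BStr)
  partrec := Computable.ofOption Cfun_primrec.to_comp
  prefixFree := by
    intro p hp q hq hpq
    -- Extract the length equations from membership in the domain.
    have hlen : ∀ r ∈ PFun.Dom (fun p : BStr => (Cfun p : Part BStr)),
        r.length = r.idxOf true + 1 + pow2 (r.idxOf true) := by
      intro r hr
      obtain ⟨y, hy⟩ := (PFun.mem_dom _ _).mp hr
      rw [Part.mem_ofOption] at hy
      unfold Cfun at hy
      by_contra h
      simp [h] at hy
    have hplen := hlen p hp
    have hqlen := hlen q hq
    -- `true ∈ p` since `indexOf true p < p.length`.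
    have hplt : p.idxOf true < p.length := by
      have h2 : 0 < pow2 (p.idxOf true) := by
        rw [pow2_eq]; positivity
      omega
    have hptrue : true ∈ p := List.idxOf_lt_length_iff.mp hplt
    obtain ⟨t, rfl⟩ := hpq
    have hidx : (p ++ t).idxOf true = p.idxOf true :=
      List.idxOf_append_of_mem hptrue
    rw [hidx] at hqlen
    have : t = [] := by
      have := hqlen
      simp only [List.length_append] at this
      have ht : t.length = 0 := by omega
      exact List.length_eq_zero_iff.mp ht
    simp [this]

lemma C_spec (k : ℕ) (s : BStr) (hs : s.length = 2 ^ k) :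
    C.f (List.replicate k false ++ true :: s) = Part.some s := by
  have hidx : (List.replicate k false ++ true :: s).idxOf true = k := by
    rw [List.idxOf_append_of_notMem (by simp)]
    simp [List.idxOf_cons_self]
  have hlen : (List.replicate k false ++ true :: s).length = k + 1 + 2 ^ k := by
    simp [hs]; omega
  have hdrop : (List.replicate k false ++ true :: s).drop (k + 1) = s := by
    have : List.replicate k false ++ true :: s =
        (List.replicate k false ++ [true]) ++ s := by simp
    rw [this]
    have hl : (List.replicate k false ++ [true]).length = k + 1 := by simp
    rw [← hl, List.drop_left]
  show ((Cfun _ : Option BStr) : Part BStr) = Part.some s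
  unfold Cfun
  rw [hidx, pow2_eq, if_pos hlen, dropIt_eq, hdrop]
  rfl

/-- The key real-number estimate: for every `M` there is `m` with
`M ≤ 2^(2m) − (2m + 1 + 2^(2m) + σ)/D`. -/
lemma exists_good_m (D σr M : ℝ) (hD : 1 < D) (hσ : 0 ≤ σr) :
    ∃ m : ℕ, M ≤ (2 : ℝ) ^ (2 * m) - ((2 * m : ℝ) + 1 + 2 ^ (2 * m) + σr) / D := by
  have hD0 : (0 : ℝ) < D := by linarith
  set d : ℝ := 1 / D with hddef
  have hd0 : 0 < d := by positivity
  have hd1 : d < 1 := by rw [hddef, div_lt_one hD0]; exact hD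
  set B : ℝ := (max M 0 + 2 * d + σr * d) / (1 - d) with hBdef
  have hnum : 0 ≤ max M 0 + 2 * d + σr * d := by
    have := le_max_right M 0
    nlinarith
  have hB0 : 0 ≤ B := div_nonneg hnum (by linarith)
  refine ⟨⌈B⌉₊, ?_⟩
  set m : ℕ := ⌈B⌉₊ with hm
  set t : ℝ := (2 : ℝ) ^ m with htdef
  have ht1 : (1 : ℝ) ≤ t := one_le_pow₀ one_le_two
  have ht0 : (0 : ℝ) ≤ t := by linarith
  have htm : (m : ℝ) + 1 ≤ t := by
    have h := Nat.lt_two_pow_self (n := m)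
    rw [htdef]
    exact_mod_cast Nat.succ_le_of_lt h
  have htB : B ≤ t := le_trans (Nat.le_ceil B) (by linarith)
  have hBe : (1 - d) * B = max M 0 + 2 * d + σr * d := by
    rw [hBdef, mul_comm]
    exact div_mul_cancel₀ _ (by linarith)
  have hεt : max M 0 + 2 * d + σr * d ≤ (1 - d) * t := by
    have h := mul_le_mul_of_nonneg_left htB (by linarith : (0 : ℝ) ≤ 1 - d)
    rw [hBe] at h
    exact h
  have hpow : (2 : ℝ) ^ (2 * m) = t ^ 2 := by
    rw [htdef, ← pow_mul, mul_comm]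
  have hdiv : ((2 * m : ℝ) + 1 + 2 ^ (2 * m) + σr) / D
      = ((2 * m : ℝ) + 1 + t ^ 2 + σr) * d := by
    rw [hpow, hddef]
    ring
  rw [hdiv, hpow]
  have e1 : max M 0 ≤ max M 0 * t := le_mul_of_one_le_right (le_max_right M 0) ht1
  have e2 : σr * d ≤ σr * d * t := le_mul_of_one_le_right (by positivity) ht1
  have e3 : (2 * (m : ℝ) + 1) * d ≤ (2 * t) * d :=
    mul_le_mul_of_nonneg_right (by linarith) hd0.le
  have h1 : (max M 0 + 2 * d + σr * d) * t ≤ ((1 - d) * t) * t :=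
    mul_le_mul_of_nonneg_right hεt ht0
  have hM : M ≤ max M 0 := le_max_left M 0
  nlinarith [h1, e1, e2, e3, hM]

end OmegaDAux

/-- For `D > 1`, the sum `Ω^D = Σ_{p ∈ dom U} 2^{−|p|/D}`
diverges to infinity. -/
theorem omegaD_diverges (U : Computer) (hU : IsUniversal U) (D : ℝ) (hD : 1 < D) :
    ∑' p : U.f.Dom, (2 : ℝ≥0∞) ^ (-((p : BStr).length : ℝ) / D) = ⊤ := by
  classical
  obtain ⟨σ, hσ⟩ := hU OmegaDAux.C
  have hD0 : (0 : ℝ) < D := by linarith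
  apply ENNReal.eq_top_of_forall_nnreal_le
  intro r
  obtain ⟨m, hm⟩ := OmegaDAux.exists_good_m D (σ : ℝ) (Real.logb 2 (r : ℝ)) hD
    (by positivity)
  set k : ℕ := 2 * m with hk
  set n : ℕ := 2 ^ k with hn
  set L : ℕ := k + 1 + n + σ with hL
  -- For every string of length `n` there is a `U`-program of length at most `L`.
  have hprog : ∀ v : Fin n → Bool,
      ∃ q : BStr, U.f q = Part.some (List.ofFn v) ∧ q.length ≤ L := by
    intro v
    have hsv : (List.ofFn v).length = 2 ^ k := by simp [hn]
    obtain ⟨q, hq1, hq2⟩ := hσ (List.replicate k false ++ true :: List.ofFn v)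
      (List.ofFn v) (OmegaDAux.C_spec k _ hsv)
    refine ⟨q, hq1, ?_⟩
    have hplen : (List.replicate k false ++ true :: List.ofFn v).length = k + 1 + n := by
      rw [List.length_append, List.length_cons, List.length_replicate, hsv, hn]
      ring
    rw [hplen] at hq2
    omega
  choose q hq1 hq2 using hprog
  have hqd : ∀ v, q v ∈ U.f.Dom := by
    intro v
    rw [PFun.mem_dom]
    exact ⟨_, by rw [hq1 v]; exact Part.mem_some _⟩
  have hinj : Function.Injective (fun v : Fin n → Bool => (⟨q v, hqd v⟩ : U.f.Dom)) := by
    intro v w h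
    have hqq : q v = q w := congrArg Subtype.val h
    have hsome : Part.some (List.ofFn v) = Part.some (List.ofFn w) := by
      rw [← hq1 v, ← hq1 w, hqq]
    exact List.ofFn_injective (Part.some_injective hsome)
  set F : Finset U.f.Dom := Finset.univ.map ⟨_, hinj⟩ with hF
  have hsum : ∑ v : Fin n → Bool, (2 : ℝ≥0∞) ^ (-(((q v).length : ℝ)) / D)
      ≤ ∑' p : U.f.Dom, (2 : ℝ≥0∞) ^ (-((p : BStr).length : ℝ) / D) := by
    have h := ENNReal.sum_le_tsum
      (f := fun p : U.f.Dom => (2 : ℝ≥0∞) ^ (-((p : BStr).length : ℝ) / D)) F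
    rwa [hF, Finset.sum_map] at h
  have hterm : ∀ v : Fin n → Bool,
      (2 : ℝ≥0∞) ^ (-(L : ℝ) / D) ≤ (2 : ℝ≥0∞) ^ (-(((q v).length : ℝ)) / D) := by
    intro v
    apply ENNReal.rpow_le_rpow_of_exponent_le one_le_two
    have hle : ((q v).length : ℝ) ≤ (L : ℝ) := by exact_mod_cast hq2 v
    have hneg : -(L : ℝ) ≤ -(((q v).length : ℝ)) := by linarith
    gcongr
  have hcard : (2 : ℝ≥0∞) ^ (n : ℕ) * (2 : ℝ≥0∞) ^ (-(L : ℝ) / D)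
      ≤ ∑ v : Fin n → Bool, (2 : ℝ≥0∞) ^ (-(((q v).length : ℝ)) / D) := by
    have h := Finset.card_nsmul_le_sum Finset.univ
      (fun v : Fin n → Bool => (2 : ℝ≥0∞) ^ (-(((q v).length : ℝ)) / D))
      ((2 : ℝ≥0∞) ^ (-(L : ℝ) / D)) (fun v _ => hterm v)
    rw [Finset.card_univ, nsmul_eq_mul] at h
    have hcc : ((Fintype.card (Fin n → Bool) : ℕ) : ℝ≥0∞) = (2 : ℝ≥0∞) ^ (n : ℕ) := by
      rw [Fintype.card_fun]
      push_cast
      simp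
    rwa [hcc] at h
  -- Now `r ≤ 2 ^ (n - L/D)`.
  have hE : (r : ℝ≥0∞) ≤ (2 : ℝ≥0∞) ^ ((n : ℝ) + -(L : ℝ) / D) := by
    rcases eq_or_ne r 0 with h0 | h0
    · simp [h0]
    have hr0 : (0 : ℝ) < (r : ℝ) := by positivity
    have hncast : ((n : ℕ) : ℝ) = (2 : ℝ) ^ (2 * m) := by
      rw [hn, hk]; push_cast; ring
    have hLcast : ((L : ℕ) : ℝ) = (2 * m : ℝ) + 1 + 2 ^ (2 * m) + (σ : ℝ) := by
      rw [hL, hn, hk]; push_cast; ring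
    have hlog : Real.logb 2 (r : ℝ) ≤ (n : ℝ) + -(L : ℝ) / D := by
      rw [hncast, hLcast, neg_div, ← sub_eq_add_neg]
      exact hm
    have hr2 : (2 : NNReal) ^ (Real.logb 2 (r : ℝ)) = r := by
      apply NNReal.coe_injective
      rw [NNReal.coe_rpow]
      push_cast
      exact Real.rpow_logb two_pos (by norm_num) hr0
    calc (r : ℝ≥0∞) = ((((2 : NNReal) ^ (Real.logb 2 (r : ℝ))) : NNReal) : ℝ≥0∞) := by
          rw [hr2]
      _ = ((2 : NNReal) : ℝ≥0∞) ^ (Real.logb 2 (r : ℝ)) :=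
          ENNReal.coe_rpow_of_ne_zero (by norm_num) _
      _ = (2 : ℝ≥0∞) ^ (Real.logb 2 (r : ℝ)) := by norm_num
      _ ≤ (2 : ℝ≥0∞) ^ ((n : ℝ) + -(L : ℝ) / D) :=
          ENNReal.rpow_le_rpow_of_exponent_le one_le_two hlog
  refine le_trans hE (le_trans ?_ (le_trans hcard hsum))
  rw [ENNReal.rpow_add _ _ (by norm_num) (by norm_num), ENNReal.rpow_natCast]
end

section
/- Let D ≥ 0 be a computable real number. Define T^1_D := { x ∈ ℝ^N : code_N(x) is not Chaitin (D/N)-random } and T^2_D := { x ∈ ℝ^N : code_N(x) is not weakly Chaitin (D/N)-random }. Then T^1_D and T^2_D are Borel sets and ℋ^D(T^1_D) = ℋ^D(T^2_D) = 0, where ℋ^D is D-dimensional Hausdorff outer measure on ℝ^N. -/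
open scoped ENNReal MeasureTheory

lemma strVal_nonneg (s : BStr) : 0 ≤ strVal s := by
  induction s with
  | nil => simp [strVal]
  | cons b t ih => cases b <;> simp [strVal] <;> linarith

lemma two_zpow_succ (n : ℕ) : (2:ℝ) ^ (-((n:ℤ)+1)) = 2 ^ (-(n:ℤ)) / 2 := by
  rw [neg_add, zpow_add₀ (by norm_num : (2:ℝ) ≠ 0)]
  norm_num
  ring

lemma strVal_add_le_one (s : BStr) : strVal s + (2:ℝ) ^ (-(s.length:ℤ)) ≤ 1 := by
  induction s with
  | nil => simp [strVal]
  | cons b t ih =>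
    have h2 : (2:ℝ) ^ (-(((b::t).length:ℤ))) = 2 ^ (-(t.length:ℤ)) / 2 := by
      rw [show ((b::t).length : ℤ) = (t.length : ℤ) + 1 by simp]
      exact two_zpow_succ t.length
    rw [h2]
    have hb : (if b then (1:ℝ) else 0) ≤ 1 := by cases b <;> norm_num
    simp only [strVal]
    linarith

lemma strVal_append (s u : BStr) :
    strVal (s ++ u) = strVal s + strVal u * (2:ℝ) ^ (-(s.length:ℤ)) := by
  induction s with
  | nil => simp [strVal]
  | cons b t ih =>
    have h2 := two_zpow_succ t.length
    simp only [List.cons_append, strVal, List.length_cons]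
    rw [show (t ++ u) = t.append u from rfl] at ih
    rw [show (t ++ u) = t.append u from rfl, ih, show ((t.length + 1 : ℕ):ℤ) = (t.length : ℤ) + 1 by push_cast; ring, two_zpow_succ]
    ring

lemma Ival_subset_of_prefix {p q : BStr} (h : p <+: q) : Ival q ⊆ Ival p := by
  obtain ⟨u, rfl⟩ := h
  intro x hx
  obtain ⟨h1, h2⟩ := hx
  have hsa := strVal_append p u
  have hu0 := strVal_nonneg u
  have hu1 := strVal_add_le_one u
  have hlen : ((p ++ u).length : ℤ) = (p.length : ℤ) + (u.length : ℤ) := by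
    simp [List.length_append]
  have hzp : (2:ℝ) ^ (-((p ++ u).length:ℤ)) = 2 ^ (-(p.length:ℤ)) * 2 ^ (-(u.length:ℤ)) := by
    rw [hlen, neg_add, zpow_add₀ (by norm_num : (2:ℝ) ≠ 0)]
  have hpow : (0:ℝ) < 2 ^ (-(p.length:ℤ)) := by positivity
  constructor
  · nlinarith
  · rw [hzp] at h2
    nlinarith

lemma Ival_cons (b : Bool) (t : BStr) :
    Ival (b :: t) = (fun x : ℝ => ((if b then (1:ℝ) else 0) + x) / 2) '' Ival t := by
  have h2 : (2:ℝ) ^ (-(((b::t).length:ℤ))) = 2 ^ (-(t.length:ℤ)) / 2 := by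
    rw [show ((b::t).length : ℤ) = (t.length : ℤ) + 1 by simp]
    exact two_zpow_succ t.length
  ext x
  simp only [Ival, Set.mem_Ico, Set.mem_image, strVal, h2]
  constructor
  · rintro ⟨hl, hr⟩
    exact ⟨2 * x - (if b then (1:ℝ) else 0), ⟨by linarith, by linarith⟩, by ring⟩
  · rintro ⟨y, ⟨hy1, hy2⟩, rfl⟩
    constructor <;> [linarith; linarith]

lemma Ival_disjoint : ∀ p q : BStr, ¬ p <+: q → ¬ q <+: p → Disjoint (Ival p) (Ival q) := by
  intro p
  induction p with
  | nil => intro q hpq _; exact absurd List.nil_prefix hpq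
  | cons a p' ih =>
    intro q hpq hqp
    cases q with
    | nil => exact absurd List.nil_prefix hqp
    | cons b q' =>
      by_cases hab : a = b
      · subst hab
        have h1 : ¬ p' <+: q' := fun h => hpq (List.cons_prefix_cons.2 ⟨rfl, h⟩)
        have h2 : ¬ q' <+: p' := fun h => hqp (List.cons_prefix_cons.2 ⟨rfl, h⟩)
        rw [Ival_cons, Ival_cons]
        refine Set.disjoint_image_of_injective ?_ (ih q' h1 h2)
        intro x y hxy
        simp only at hxy
        linarith
      · have hsub1 : Ival (a :: p') ⊆ Ival [a] := Ival_subset_of_prefix ⟨p', rfl⟩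
        have hsub2 : Ival (b :: q') ⊆ Ival [b] := Ival_subset_of_prefix ⟨q', rfl⟩
        refine Set.disjoint_of_subset hsub1 hsub2 ?_
        have hIf : Ival [false] = Set.Ico (0:ℝ) (1/2) := by
          norm_num [Ival, strVal]
        have hIt : Ival [true] = Set.Ico (1/2 : ℝ) 1 := by
          norm_num [Ival, strVal]
        rcases a with _|_ <;> rcases b with _|_
        · exact absurd rfl hab
        · rw [hIf, hIt]; exact Set.Ico_disjoint_Ico_same
        · rw [hIf, hIt]; exact (Set.Ico_disjoint_Ico_same).symm
        · exact absurd rfl hab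

lemma Ival_subset_Ico01 (s : BStr) : Ival s ⊆ Set.Ico (0:ℝ) 1 := by
  intro x ⟨h1, h2⟩
  exact ⟨le_trans (strVal_nonneg s) h1, lt_of_lt_of_le h2 (strVal_add_le_one s)⟩

lemma vol_Ival (s : BStr) :
    MeasureTheory.volume (Ival s) = (2:ℝ≥0∞) ^ (-(s.length:ℝ)) := by
  rw [Ival, Real.volume_Ico, add_sub_cancel_left]
  have h1 : (2:ℝ) ^ (-(s.length:ℤ)) = (2:ℝ) ^ (-(s.length:ℝ)) := by
    rw [← Real.rpow_intCast 2 (-(s.length:ℤ)), Int.cast_neg, Int.cast_natCast]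
  rw [h1, ← ENNReal.ofReal_ofNat 2, ENNReal.ofReal_rpow_of_pos (by norm_num)]

lemma kraft {S : Set BStr} (hS : PrefixFree S) :
    ∑' p : S, (2:ℝ≥0∞) ^ (-((p : BStr).length : ℝ)) ≤ 1 := by
  have hvol : ∀ p : S, (2:ℝ≥0∞) ^ (-((p : BStr).length : ℝ))
      = MeasureTheory.volume (Ival (p : BStr)) := fun p => (vol_Ival _).symm
  calc ∑' p : S, (2:ℝ≥0∞) ^ (-((p : BStr).length : ℝ))
      = ∑' p : S, MeasureTheory.volume (Ival (p : BStr)) := tsum_congr hvol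
    _ = MeasureTheory.volume (⋃ p : S, Ival (p : BStr)) := by
        refine (MeasureTheory.measure_iUnion ?_ (fun p => measurableSet_Ico)).symm
        intro p q hpq
        refine Ival_disjoint _ _ (fun h => hpq ?_) (fun h => hpq ?_)
        · exact Subtype.ext (hS _ p.2 _ q.2 h)
        · exact Subtype.ext (hS _ q.2 _ p.2 h).symm
    _ ≤ MeasureTheory.volume (Set.Ico (0:ℝ) 1) := by
        refine MeasureTheory.measure_mono ?_
        exact Set.iUnion_subset fun p => Ival_subset_Ico01 _
    _ = 1 := by simp [Real.volume_Ico]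

lemma exists_prog {U : Computer} (hU : IsUniversal U) (s : BStr) :
    ∃ p : BStr, U.f p = Part.some s := by
  classical
  have hg : Primrec (fun p : BStr => if p = [] then some s else none) :=
    Primrec.ite (PrimrecRel.comp Primrec.eq Primrec.id (Primrec.const ([] : BStr)))
      (Primrec.const (some s)) (Primrec.const none)
  have hdom : ∀ p : BStr,
      ((if p = [] then some s else none : Option BStr) : Part BStr).Dom ↔ p = [] := by
    intro p
    by_cases hp : p = [] <;> simp [hp, Part.ofOption_dom]
  let C : Computer :=
    { f := fun p => ((if p = [] then some s else none : Option BStr) : Part BStr)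
      partrec := Computable.ofOption hg.to_comp
      prefixFree := by
        intro p hp q hq _
        have h1 : p = [] := (hdom p).1 hp
        have h2 : q = [] := (hdom q).1 hq
        rw [h1, h2] }
  obtain ⟨sim, hsim⟩ := hU C
  obtain ⟨q, hq, -⟩ := hsim [] s (by simp [C, Part.coe_some])
  exact ⟨q, hq⟩

lemma kc_spec {U : Computer} (hU : IsUniversal U) (s : BStr) :
    ∃ p : BStr, U.f p = Part.some s ∧ p.length = Kc U s := by
  have hne : { k | ∃ p : BStr, U.f p = Part.some s ∧ p.length = k }.Nonempty := by
    obtain ⟨p, hp⟩ := exists_prog hU s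
    exact ⟨p.length, p, hp, rfl⟩
  exact Nat.sInf_mem hne

/-- A choice of minimal program. -/
noncomputable def pm (U : Computer) (hU : IsUniversal U) (s : BStr) : BStr :=
  (kc_spec hU s).choose

lemma pm_spec {U : Computer} (hU : IsUniversal U) (s : BStr) :
    U.f (pm U hU s) = Part.some s ∧ (pm U hU s).length = Kc U s :=
  (kc_spec hU s).choose_spec

lemma sum_two_pow_kc {U : Computer} (hU : IsUniversal U) :
    ∑' s : BStr, (2:ℝ≥0∞) ^ (-(Kc U s : ℝ)) ≤ 1 := by
  have hmem : ∀ s : BStr, pm U hU s ∈ U.f.Dom := by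
    intro s
    have := (pm_spec hU s).1
    rw [PFun.dom_eq]
    exact ⟨s, this ▸ Part.mem_some s⟩
  let φ : BStr → U.f.Dom := fun s => ⟨pm U hU s, hmem s⟩
  have hinj : Function.Injective φ := by
    intro s t hst
    have h1 := (pm_spec hU s).1
    have h2 := (pm_spec hU t).1
    have : Part.some s = Part.some t := by
      rw [← h1, ← h2]
      exact congrArg U.f (congrArg Subtype.val hst)
    have hm : s ∈ Part.some t := this ▸ Part.mem_some s
    simpa using hm
  calc ∑' s : BStr, (2:ℝ≥0∞) ^ (-(Kc U s : ℝ))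
      = ∑' s : BStr, (fun p : U.f.Dom => (2:ℝ≥0∞) ^ (-((p : BStr).length : ℝ))) (φ s) := by
        refine tsum_congr fun s => ?_
        simp only [φ, (pm_spec hU s).2]
    _ ≤ ∑' p : U.f.Dom, (2:ℝ≥0∞) ^ (-((p : BStr).length : ℝ)) :=
        ENNReal.tsum_comp_le_tsum_of_injective hinj _
    _ ≤ 1 := kraft U.prefixFree

lemma pre_length (α : ℕ → Bool) (n : ℕ) : (pre α n).length = n := by simp [pre]

lemma pre_getD (α : ℕ → Bool) (n j : ℕ) (hj : j < n) : (pre α n).getD j false = α j := by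
  have hl : j < (pre α n).length := by rw [pre_length]; exact hj
  rw [List.getD_eq_getElem _ _ hl]
  simp [pre]

lemma pre_eq_iff (α : ℕ → Bool) {n : ℕ} {t : BStr} (h : t.length = n) :
    pre α n = t ↔ ∀ j, j < n → α j = t.getD j false := by
  constructor
  · intro he j hj
    rw [← he, pre_getD α n j hj]
  · intro hall
    apply List.ext_getElem (by rw [pre_length, h])
    intro i h1 h2
    have hi : i < n := by rwa [pre_length] at h1
    have : (pre α n)[i] = α i := by simp [pre]
    rw [this, hall i hi, List.getD_eq_getElem _ _ h2]

lemma pre_eq_pre_iff (α β : ℕ → Bool) (n : ℕ) :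
    pre α n = pre β n ↔ ∀ j, j < n → α j = β j := by
  rw [pre_eq_iff α (pre_length β n)]
  exact forall_congr' fun j => imp_congr_right fun hj => by rw [pre_getD β n j hj]

lemma floor_two_mul_ediv (t : ℝ) : ⌊2 * t⌋ / 2 = ⌊t⌋ := by
  have h1 : (2:ℤ) * ⌊t⌋ ≤ ⌊2 * t⌋ := by
    apply Int.le_floor.2; push_cast; linarith [Int.floor_le t]
  have h2 : ⌊2 * t⌋ < 2 * ⌊t⌋ + 2 := by
    apply Int.floor_lt.2; push_cast; linarith [Int.lt_floor_add_one t]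
  omega

lemma floor_eq_of_binExp_eq {x y : ℝ} (m : ℕ) (h : ∀ k, k < m → binExp x k = binExp y k) :
    ⌊Int.fract x * 2 ^ m⌋ = ⌊Int.fract y * 2 ^ m⌋ := by
  induction m with
  | zero => simp [Int.floor_fract]
  | succ m ih =>
    have key : ∀ a : ℝ, ⌊a * 2 ^ (m+1)⌋ = 2 * ⌊a * 2 ^ m⌋ + ⌊a * 2 ^ (m+1)⌋ % 2 := by
      intro a
      have h1 : ⌊2 * (a * 2 ^ m)⌋ / 2 = ⌊a * 2 ^ m⌋ := floor_two_mul_ediv _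
      have h2 : a * 2 ^ (m+1) = 2 * (a * 2 ^ m) := by ring
      rw [h2]
      omega
    have hd : ⌊Int.fract x * 2 ^ (m+1)⌋ % 2 = ⌊Int.fract y * 2 ^ (m+1)⌋ % 2 := by
      have hb := h m (Nat.lt_succ_self m)
      simp only [binExp] at hb
      have e1 := Int.emod_two_eq ⌊Int.fract x * 2 ^ (m+1)⌋
      have e2 := Int.emod_two_eq ⌊Int.fract y * 2 ^ (m+1)⌋
      rcases e1 with e1|e1 <;> rcases e2 with e2|e2 <;> simp [e1, e2] at hb ⊢
    have hih := ih (fun k hk => h k (Nat.lt_succ_of_lt hk))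
    rw [key (Int.fract x), key (Int.fract y), hih, hd]

lemma fract_dist_le_of_binExp_eq {x y : ℝ} (m : ℕ)
    (h : ∀ k, k < m → binExp x k = binExp y k) :
    |Int.fract x - Int.fract y| ≤ (2:ℝ) ^ (-(m:ℤ)) := by
  have hf := floor_eq_of_binExp_eq m h
  have hP : (0:ℝ) < 2 ^ m := by positivity
  have hx1 : (⌊Int.fract x * 2 ^ m⌋ : ℝ) ≤ Int.fract x * 2 ^ m := Int.floor_le _
  have hx2 : Int.fract x * 2 ^ m < ⌊Int.fract x * 2 ^ m⌋ + 1 := Int.lt_floor_add_one _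
  have hy1 : (⌊Int.fract y * 2 ^ m⌋ : ℝ) ≤ Int.fract y * 2 ^ m := Int.floor_le _
  have hy2 : Int.fract y * 2 ^ m < ⌊Int.fract y * 2 ^ m⌋ + 1 := Int.lt_floor_add_one _
  rw [hf] at hx1 hx2
  have habs : |Int.fract x * 2 ^ m - Int.fract y * 2 ^ m| ≤ 1 := by
    rw [abs_le]; constructor <;> linarith
  have hzp : (2:ℝ) ^ (-(m:ℤ)) = ((2:ℝ) ^ m)⁻¹ := by
    rw [zpow_neg, zpow_natCast]
  rw [hzp]
  rw [show Int.fract x * 2 ^ m - Int.fract y * 2 ^ m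
      = (Int.fract x - Int.fract y) * 2 ^ m by ring, abs_mul, abs_of_pos hP] at habs
  rw [← le_div_iff₀ hP] at habs
  rw [one_div] at habs
  exact habs

/-- The cylinder set. -/
def Cyl (N : ℕ) (hN : 0 < N) (k : Fin N → ℤ) (t : BStr) : Set (EuclideanSpace ℝ (Fin N)) :=
  {x | (∀ i, ⌊x i⌋ = k i) ∧ pre (codeSeq N hN x) t.length = t}

lemma dist_le_cyl {N : ℕ} {hN : 0 < N} {k : Fin N → ℤ} {t : BStr}
    {x y : EuclideanSpace ℝ (Fin N)} (hx : x ∈ Cyl N hN k t) (hy : y ∈ Cyl N hN k t) :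
    dist x y ≤ Real.sqrt N * 2 ^ (-(t.length / N : ℕ) : ℤ) := by
  set m := t.length / N with hm
  have hmN : m * N ≤ t.length := by rw [hm]; exact Nat.div_mul_le_self _ _
  have hdig : ∀ i : Fin N, ∀ kk, kk < m → binExp (x i) kk = binExp (y i) kk := by
    intro i kk hkk
    set j := i.val + kk * N with hj
    have hjlt : j < t.length := by
      have e : (kk + 1) * N = kk * N + N := by ring
      have h1 : (kk + 1) * N ≤ m * N := Nat.mul_le_mul_right N hkk
      have h2 := i.isLt
      omega
    have hcode : ∀ z : EuclideanSpace ℝ (Fin N), codeSeq N hN z j = binExp (z i) kk := by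
      intro z
      have hmod : j % N = i.val := by
        rw [hj, Nat.add_mul_mod_self_right, Nat.mod_eq_of_lt i.isLt]
      have hdiv : j / N = kk := by
        rw [hj, Nat.add_mul_div_right _ _ hN, Nat.div_eq_of_lt i.isLt, zero_add]
      have hfin : (⟨j % N, Nat.mod_lt j hN⟩ : Fin N) = i := Fin.ext hmod
      rw [codeSeq, hfin, hdiv]
    have hpre : pre (codeSeq N hN x) t.length = pre (codeSeq N hN y) t.length :=
      hx.2.trans hy.2.symm
    have := (pre_eq_pre_iff _ _ _).1 hpre j hjlt
    rwa [hcode x, hcode y] at this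
  have hcoord : ∀ i : Fin N, dist (x i) (y i) ≤ (2:ℝ) ^ (-(m:ℤ)) := by
    intro i
    have hfr := fract_dist_le_of_binExp_eq m (hdig i)
    have hfx : (⌊x i⌋ : ℝ) + Int.fract (x i) = x i := Int.floor_add_fract _
    have hfy : (⌊y i⌋ : ℝ) + Int.fract (y i) = y i := Int.floor_add_fract _
    have hk : (⌊x i⌋ : ℝ) = (⌊y i⌋ : ℝ) := by rw [hx.1 i, hy.1 i]
    rw [Real.dist_eq]
    have : x i - y i = Int.fract (x i) - Int.fract (y i) := by linarith
    rw [this]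
    exact hfr
  have hc0 : (0:ℝ) ≤ (2:ℝ) ^ (-(m:ℤ)) := by positivity
  rw [EuclideanSpace.dist_eq]
  have hsum : ∑ i, dist (x i) (y i) ^ 2 ≤ (N:ℝ) * ((2:ℝ) ^ (-(m:ℤ))) ^ 2 := by
    calc ∑ i, dist (x i) (y i) ^ 2 ≤ ∑ _i : Fin N, ((2:ℝ) ^ (-(m:ℤ))) ^ 2 := by
          refine Finset.sum_le_sum fun i _ => ?_
          exact pow_le_pow_left₀ dist_nonneg (hcoord i) 2
      _ = (N:ℝ) * ((2:ℝ) ^ (-(m:ℤ))) ^ 2 := by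
          rw [Finset.sum_const, Finset.card_univ, Fintype.card_fin, nsmul_eq_mul]
  calc Real.sqrt (∑ i, dist (x i) (y i) ^ 2)
      ≤ Real.sqrt ((N:ℝ) * ((2:ℝ) ^ (-(m:ℤ))) ^ 2) := Real.sqrt_le_sqrt hsum
    _ = Real.sqrt N * 2 ^ (-(m:ℤ)) := by
        rw [Real.sqrt_mul (Nat.cast_nonneg N), Real.sqrt_sq hc0]

lemma diam_cyl_le {N : ℕ} {hN : 0 < N} (k : Fin N → ℤ) (t : BStr) :
    EMetric.diam (Cyl N hN k t)
      ≤ ENNReal.ofReal (Real.sqrt N * 2 ^ (-(t.length / N : ℕ) : ℤ)) :=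
  EMetric.diam_le fun x hx y hy =>
    (edist_le_ofReal (by positivity)).2 (dist_le_cyl hx hy)

lemma measurable_codeSeq_apply (N : ℕ) (hN : 0 < N) (j : ℕ) :
    Measurable fun x : EuclideanSpace ℝ (Fin N) => codeSeq N hN x j := by
  have h1 : Measurable fun x : EuclideanSpace ℝ (Fin N) => x ⟨j % N, Nat.mod_lt j hN⟩ :=
    (measurable_pi_apply _).comp (WithLp.measurable_ofLp 2 _)
  have h2 : Measurable fun r : ℝ => binExp r (j / N) := by
    have hm : Measurable fun r : ℝ => ⌊Int.fract r * 2 ^ (j / N + 1)⌋ :=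
      (measurable_fract.mul_const _).floor
    exact Measurable.comp
      (measurable_from_top (f := fun z : ℤ => decide (z % 2 = 1))) hm
  exact h2.comp h1

lemma measurableSet_pre_eq (N : ℕ) (hN : 0 < N) (n : ℕ) (t : BStr) :
    MeasurableSet {x : EuclideanSpace ℝ (Fin N) | pre (codeSeq N hN x) n = t} := by
  by_cases ht : t.length = n
  · have : {x : EuclideanSpace ℝ (Fin N) | pre (codeSeq N hN x) n = t}
        = ⋂ (j : ℕ) (_ : j < n), {x | codeSeq N hN x j = t.getD j false} := by
      ext x
      simp only [Set.mem_setOf_eq, Set.mem_iInter]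
      exact pre_eq_iff _ ht
    rw [this]
    refine MeasurableSet.iInter fun j => MeasurableSet.iInter fun _ => ?_
    have : {x : EuclideanSpace ℝ (Fin N) | codeSeq N hN x j = t.getD j false}
        = (fun x : EuclideanSpace ℝ (Fin N) => codeSeq N hN x j) ⁻¹' {t.getD j false} := rfl
    rw [this]
    exact (measurable_codeSeq_apply N hN j) (MeasurableSpace.measurableSet_top)
  · have : {x : EuclideanSpace ℝ (Fin N) | pre (codeSeq N hN x) n = t} = ∅ := by
      ext x
      simp only [Set.mem_setOf_eq, Set.mem_empty_iff_false, iff_false]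
      intro he
      exact ht (by rw [← he, pre_length])
    rw [this]
    exact MeasurableSet.empty

lemma measurableSet_pre_prop (N : ℕ) (hN : 0 < N) (n : ℕ) (P : BStr → Prop) :
    MeasurableSet {x : EuclideanSpace ℝ (Fin N) | P (pre (codeSeq N hN x) n)} := by
  have : {x : EuclideanSpace ℝ (Fin N) | P (pre (codeSeq N hN x) n)}
      = ⋃ (t : {t : BStr // P t}), {x | pre (codeSeq N hN x) n = (t : BStr)} := by
    ext x
    simp only [Set.mem_setOf_eq, Set.mem_iUnion]
    exact ⟨fun h => ⟨⟨_, h⟩, rfl⟩, fun ⟨t, ht⟩ => ht ▸ t.2⟩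
  rw [this]
  exact MeasurableSet.iUnion fun t => measurableSet_pre_eq N hN n t

lemma measurableSet_chaitin (U : Computer) (N : ℕ) (hN : 0 < N) (d : ℝ) :
    MeasurableSet {x : EuclideanSpace ℝ (Fin N) | ChaitinRandom U d (codeSeq N hN x)} := by
  have hset : {x : EuclideanSpace ℝ (Fin N) | ChaitinRandom U d (codeSeq N hN x)}
      = ⋂ (b : ℕ), ⋃ (m : ℕ), ⋂ (n : ℕ), ⋂ (_ : m ≤ n),
          {x | (b:ℝ) ≤ (Kc U (pre (codeSeq N hN x) n) : ℝ) - d * n} := by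
    ext x
    simp only [Set.mem_setOf_eq, Set.mem_iInter, Set.mem_iUnion]
    unfold ChaitinRandom
    rw [Filter.tendsto_atTop_atTop]
    constructor
    · intro h b
      obtain ⟨i, hi⟩ := h (b:ℝ)
      exact ⟨i, fun n hn => hi n hn⟩
    · intro h b
      obtain ⟨i, hi⟩ := h ⌈b⌉₊
      exact ⟨i, fun n hn => le_trans (Nat.le_ceil b) (hi n hn)⟩
  rw [hset]
  exact MeasurableSet.iInter fun b => MeasurableSet.iUnion fun m =>
    MeasurableSet.iInter fun n => MeasurableSet.iInter fun _ =>
      measurableSet_pre_prop N hN n (fun t => (b:ℝ) ≤ (Kc U t : ℝ) - d * n)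

lemma measurableSet_weak (U : Computer) (N : ℕ) (hN : 0 < N) (d : ℝ) :
    MeasurableSet {x : EuclideanSpace ℝ (Fin N) | WeaklyChaitinRandom U d (codeSeq N hN x)} := by
  have hset : {x : EuclideanSpace ℝ (Fin N) | WeaklyChaitinRandom U d (codeSeq N hN x)}
      = ⋃ (c : ℕ), ⋂ (n : ℕ),
          {x | d * n - (c:ℝ) ≤ (Kc U (pre (codeSeq N hN x) n) : ℝ)} := by
    ext x
    simp only [Set.mem_setOf_eq, Set.mem_iInter, Set.mem_iUnion]
    unfold WeaklyChaitinRandom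
    constructor
    · rintro ⟨c, hc⟩
      refine ⟨⌈c⌉₊, fun n => ?_⟩
      have := hc n
      have hcc : c ≤ (⌈c⌉₊ : ℝ) := Nat.le_ceil c
      linarith
    · rintro ⟨c, hc⟩
      exact ⟨(c:ℝ), hc⟩
  rw [hset]
  exact MeasurableSet.iUnion fun c => MeasurableSet.iInter fun n =>
    measurableSet_pre_prop N hN n (fun t => d * n - (c:ℝ) ≤ (Kc U t : ℝ))

lemma diam_pow_bound {N : ℕ} (hN : 0 < N) {D : ℝ} (hD0 : 0 ≤ D) (t : BStr) :
    (ENNReal.ofReal (Real.sqrt N * 2 ^ (-(t.length / N : ℕ) : ℤ))) ^ D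
      ≤ ENNReal.ofReal ((Real.sqrt N * 2) ^ D)
          * (2:ℝ≥0∞) ^ (-(D / N * t.length) : ℝ) := by
  set n := t.length with hn
  set m := n / N with hmdef
  have hNpos : (0:ℝ) < N := by exact_mod_cast hN
  have hsN : (0:ℝ) < Real.sqrt N := Real.sqrt_pos.2 hNpos
  have ha : (0:ℝ) < Real.sqrt N * 2 ^ (-(m:ℤ)) := by positivity
  have hmn : (n:ℝ) < (m:ℝ) * N + N := by
    have h1 : n % N < N := Nat.mod_lt _ hN
    have h2 : N * m + n % N = n := by rw [hmdef]; exact Nat.div_add_mod n N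
    have h3 : n < m * N + N := by rw [Nat.mul_comm m N]; omega
    exact_mod_cast h3
  have hexp : (-(m:ℝ)) ≤ 1 - (n:ℝ)/N := by
    have hdiv : (n:ℝ)/N < (m:ℝ) + 1 := by
      rw [div_lt_iff₀ hNpos]; nlinarith
    linarith
  have hzr : (2:ℝ) ^ (-(m:ℤ)) = (2:ℝ) ^ (-(m:ℝ)) := by
    rw [← Real.rpow_intCast 2 (-(m:ℤ)), Int.cast_neg, Int.cast_natCast]
  have h2m : (2:ℝ) ^ (-(m:ℝ)) ≤ 2 * (2:ℝ) ^ (-((n:ℝ)/N)) := by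
    have hle : (2:ℝ) ^ (-(m:ℝ)) ≤ (2:ℝ) ^ (1 - (n:ℝ)/N) :=
      Real.rpow_le_rpow_of_exponent_le one_le_two hexp
    rwa [show (1 - (n:ℝ)/N) = 1 + (-((n:ℝ)/N)) by ring,
      Real.rpow_add two_pos, Real.rpow_one] at hle
  have hb : Real.sqrt N * 2 ^ (-(m:ℤ)) ≤ (Real.sqrt N * 2) * (2:ℝ) ^ (-((n:ℝ)/N)) := by
    rw [hzr]
    calc Real.sqrt N * (2:ℝ) ^ (-(m:ℝ)) ≤ Real.sqrt N * (2 * (2:ℝ) ^ (-((n:ℝ)/N))) :=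
          mul_le_mul_of_nonneg_left h2m hsN.le
      _ = (Real.sqrt N * 2) * (2:ℝ) ^ (-((n:ℝ)/N)) := by ring
  have hrpos : (0:ℝ) < (2:ℝ) ^ (-((n:ℝ)/N)) := Real.rpow_pos_of_pos two_pos _
  have hreal : (Real.sqrt N * 2 ^ (-(m:ℤ))) ^ D
      ≤ (Real.sqrt N * 2) ^ D * (2:ℝ) ^ (-(D / N * n) : ℝ) := by
    calc (Real.sqrt N * 2 ^ (-(m:ℤ))) ^ D
        ≤ ((Real.sqrt N * 2) * (2:ℝ) ^ (-((n:ℝ)/N))) ^ D :=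
          Real.rpow_le_rpow ha.le hb hD0
      _ = (Real.sqrt N * 2) ^ D * ((2:ℝ) ^ (-((n:ℝ)/N))) ^ D :=
          Real.mul_rpow (by positivity) hrpos.le
      _ = (Real.sqrt N * 2) ^ D * (2:ℝ) ^ (-(D / N * n) : ℝ) := by
          rw [← Real.rpow_mul (by norm_num : (0:ℝ) ≤ 2)]
          congr 1
          field_simp
  calc (ENNReal.ofReal (Real.sqrt N * 2 ^ (-(m:ℤ)))) ^ D
      = ENNReal.ofReal ((Real.sqrt N * 2 ^ (-(m:ℤ))) ^ D) := ENNReal.ofReal_rpow_of_pos ha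
    _ ≤ ENNReal.ofReal ((Real.sqrt N * 2) ^ D * (2:ℝ) ^ (-(D / N * n) : ℝ)) :=
        ENNReal.ofReal_le_ofReal hreal
    _ = ENNReal.ofReal ((Real.sqrt N * 2) ^ D) * ENNReal.ofReal ((2:ℝ) ^ (-(D / N * n) : ℝ)) :=
        ENNReal.ofReal_mul (by positivity)
    _ = ENNReal.ofReal ((Real.sqrt N * 2) ^ D) * (2:ℝ≥0∞) ^ (-(D / N * n) : ℝ) := by
        rw [← ENNReal.ofReal_ofNat 2, ENNReal.ofReal_rpow_of_pos (by norm_num)]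

lemma sum_bad_le {U : Computer} (hU : IsUniversal U) {d : ℝ} (hd : 0 ≤ d) (c : ℕ) :
    ∑' t : {t : BStr // (Kc U t : ℝ) < d * t.length + c},
        (2:ℝ≥0∞) ^ (-(d * (t : BStr).length) : ℝ) ≤ 2 ^ (c:ℝ) := by
  calc ∑' t : {t : BStr // (Kc U t : ℝ) < d * t.length + c},
        (2:ℝ≥0∞) ^ (-(d * (t : BStr).length) : ℝ)
      ≤ ∑' t : {t : BStr // (Kc U t : ℝ) < d * t.length + c},
          (2:ℝ≥0∞) ^ (c:ℝ) * (2:ℝ≥0∞) ^ (-(Kc U (t : BStr) : ℝ)) := by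
        refine ENNReal.tsum_le_tsum fun t => ?_
        rw [← ENNReal.rpow_add _ _ (by norm_num) (by norm_num)]
        refine ENNReal.rpow_le_rpow_of_exponent_le (by norm_num) ?_
        have := t.2
        linarith
    _ = (2:ℝ≥0∞) ^ (c:ℝ) * ∑' t : {t : BStr // (Kc U t : ℝ) < d * t.length + c},
          (2:ℝ≥0∞) ^ (-(Kc U (t : BStr) : ℝ)) := ENNReal.tsum_mul_left
    _ ≤ (2:ℝ≥0∞) ^ (c:ℝ) * 1 := by
        refine mul_le_mul_right ?_ _
        exact le_trans
          (ENNReal.tsum_comp_le_tsum_of_injective Subtype.val_injective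
            (fun s : BStr => (2:ℝ≥0∞) ^ (-(Kc U s : ℝ)))) (sum_two_pow_kc hU)
    _ = (2:ℝ≥0∞) ^ (c:ℝ) := mul_one _

lemma mz_cyl {U : Computer} (hU : IsUniversal U) {N : ℕ} (hN : 0 < N)
    {D : ℝ} (hD0 : 0 ≤ D) (c : ℕ) (k : Fin N → ℤ) :
    μH[D] {x : EuclideanSpace ℝ (Fin N) | (∀ i, ⌊x i⌋ = k i) ∧
        ∀ m : ℕ, ∃ n, m ≤ n ∧ (Kc U (pre (codeSeq N hN x) n) : ℝ) < D / N * n + c} = 0 := by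
  classical
  have hd0 : 0 ≤ D / N := div_nonneg hD0 (Nat.cast_nonneg N)
  set B : Set BStr := {t | (Kc U t : ℝ) < D / N * t.length + c} with hB
  set w : BStr → ℝ≥0∞ := fun t => (2:ℝ≥0∞) ^ (-(D / N * t.length) : ℝ) with hw
  have hTle : ∑' t : B, w t ≤ 2 ^ (c:ℝ) := sum_bad_le hU hd0 c
  have hTne : ∑' t : B, w t ≠ ⊤ :=
    ne_top_of_le_ne_top (ENNReal.rpow_ne_top_of_nonneg (Nat.cast_nonneg c) (by norm_num)) hTle
  set C : ℝ≥0∞ := ENNReal.ofReal ((Real.sqrt N * 2) ^ D) with hC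
  have hNpos : (0:ℝ) < N := by exact_mod_cast hN
  have hC0 : C ≠ 0 := by
    rw [hC, Ne, ENNReal.ofReal_eq_zero, not_le]
    have : (0:ℝ) < Real.sqrt N * 2 := by positivity
    exact Real.rpow_pos_of_pos this D
  have hCt : C ≠ ⊤ := ENNReal.ofReal_ne_top
  refine le_antisymm ?_ zero_le
  rw [MeasureTheory.Measure.hausdorffMeasure_apply]
  refine iSup₂_le fun r hr => ?_
  refine ENNReal.le_of_forall_pos_le_add fun ε hε _ => ?_
  rw [zero_add]
  set δ := (ε : ℝ≥0∞) / C with hδ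
  have hδ0 : 0 < δ := ENNReal.div_pos (by exact_mod_cast hε.ne') hCt
  have htail := ENNReal.tendsto_tsum_compl_atTop_zero (f := fun t : B => w t) hTne
  obtain ⟨F, hF⟩ := ((ENNReal.tendsto_nhds_zero.1 htail) δ hδ0).exists
  set m₁ := (F.sup fun t => (t : BStr).length) + 1 with hm₁
  -- diameters eventually small
  have hdivtop : Filter.Tendsto (fun n : ℕ => n / N) Filter.atTop Filter.atTop := by
    refine Filter.tendsto_atTop_atTop.2 fun b => ⟨b * N, fun n hn => ?_⟩
    exact (Nat.le_div_iff_mul_le hN).2 hn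
  have hpow0 : Filter.Tendsto (fun j : ℕ => (2:ℝ) ^ (-(j:ℤ))) Filter.atTop (nhds 0) := by
    have h := tendsto_pow_atTop_nhds_zero_of_lt_one
      (by norm_num : (0:ℝ) ≤ 2⁻¹) (by norm_num : (2⁻¹:ℝ) < 1)
    exact h.congr fun j => by rw [zpow_neg, zpow_natCast, inv_pow]
  have hcomp : Filter.Tendsto
      (fun n : ℕ => ENNReal.ofReal (Real.sqrt N * 2 ^ (-(n / N : ℕ) : ℤ)))
      Filter.atTop (nhds 0) := by
    have h1 : Filter.Tendsto (fun n : ℕ => Real.sqrt N * (2:ℝ) ^ (-(n / N : ℕ) : ℤ))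
        Filter.atTop (nhds 0) := by
      have := (hpow0.comp hdivtop).const_mul (Real.sqrt N)
      rw [mul_zero] at this
      exact this
    have := ENNReal.tendsto_ofReal h1
    simpa using this
  obtain ⟨m₂, hm₂⟩ := Filter.eventually_atTop.1 (hcomp.eventually_lt_const hr)
  set m := max m₁ m₂ with hm
  obtain ⟨dB⟩ := nonempty_denumerable BStr
  set Φ : ℕ ≃ BStr := (@Denumerable.eqv BStr dB).symm with hΦ
  set e : ℕ → BStr := fun i => Φ i with he
  set G : BStr → Set (EuclideanSpace ℝ (Fin N)) :=
    fun t => if t ∈ B ∧ m ≤ t.length then Cyl N hN k t else ∅ with hG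
  have hcov : {x : EuclideanSpace ℝ (Fin N) | (∀ i, ⌊x i⌋ = k i) ∧
      ∀ m' : ℕ, ∃ n, m' ≤ n ∧ (Kc U (pre (codeSeq N hN x) n) : ℝ) < D / N * n + c}
      ⊆ ⋃ i, G (e i) := by
    intro x hx
    obtain ⟨n, hn, hlt⟩ := hx.2 m
    set t := pre (codeSeq N hN x) n with ht
    have hlen : t.length = n := pre_length _ _
    have htB : t ∈ B := by rw [hB]; simp only [Set.mem_setOf_eq]; rw [hlen]; exact hlt
    have hml : m ≤ t.length := by rw [hlen]; exact hn
    refine Set.mem_iUnion.2 ⟨Φ.symm t, ?_⟩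
    have het : e (Φ.symm t) = t := by rw [he]; simp
    rw [het]
    simp only [hG]
    rw [if_pos ⟨htB, hml⟩]
    exact ⟨hx.1, by rw [hlen]⟩
  have hdiam : ∀ i, EMetric.diam (G (e i)) ≤ r := by
    intro i
    simp only [hG]
    by_cases hcond : e i ∈ B ∧ m ≤ (e i).length
    · rw [if_pos hcond]
      refine le_trans (diam_cyl_le k (e i)) (le_of_lt (hm₂ (e i).length ?_))
      exact le_trans (le_max_right m₁ m₂) hcond.2
    · rw [if_neg hcond]
      exact (EMetric.diam_empty).trans_le zero_le
  have hterm : ∀ t : BStr, (⨆ _ : (G t).Nonempty, EMetric.diam (G t) ^ D)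
      ≤ Set.indicator {t : BStr | t ∈ B ∧ m ≤ t.length} (fun t => C * w t) t := by
    intro t
    by_cases hcond : t ∈ B ∧ m ≤ t.length
    · rw [Set.indicator_of_mem
        (show t ∈ {t : BStr | t ∈ B ∧ m ≤ t.length} from hcond)]
      refine iSup_le fun _ => ?_
      simp only [hG]
      rw [if_pos hcond]
      calc EMetric.diam (Cyl N hN k t) ^ D
          ≤ (ENNReal.ofReal (Real.sqrt N * 2 ^ (-(t.length / N : ℕ) : ℤ))) ^ D :=
            ENNReal.rpow_le_rpow (diam_cyl_le k t) hD0
        _ ≤ C * w t := diam_pow_bound hN hD0 t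
    · rw [Set.indicator_of_notMem
        (show t ∉ {t : BStr | t ∈ B ∧ m ≤ t.length} from hcond)]
      simp only [hG]
      rw [if_neg hcond]
      simp
  have htailsum : ∑' t : {t : BStr // t ∈ B ∧ m ≤ t.length}, w (t : BStr) ≤ δ := by
    have hnotF : ∀ t : {t : BStr // t ∈ B ∧ m ≤ t.length}, (⟨(t : BStr), t.2.1⟩ : B) ∉ F := by
      intro t hmem
      have h1 : (t : BStr).length ≤ F.sup fun t => (t : BStr).length :=
        Finset.le_sup (f := fun t : B => (t : BStr).length) hmem
      have h2 : m₁ ≤ m := le_max_left _ _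
      have h3 := t.2.2
      omega
    set ι : {t : BStr // t ∈ B ∧ m ≤ t.length} → {i : B // i ∉ F} :=
      fun t => ⟨⟨(t : BStr), t.2.1⟩, hnotF t⟩ with hι
    have hinj : Function.Injective ι := by
      intro a b hab
      apply Subtype.ext
      exact congrArg (fun z : {i : B // i ∉ F} => ((z : B) : BStr)) hab
    calc ∑' t : {t : BStr // t ∈ B ∧ m ≤ t.length}, w (t : BStr)
        = ∑' t : {t : BStr // t ∈ B ∧ m ≤ t.length},
            (fun i : {i : B // i ∉ F} => w ((i : B) : BStr)) (ι t) := rfl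
      _ ≤ ∑' i : {i : B // i ∉ F}, w ((i : B) : BStr) :=
          ENNReal.tsum_comp_le_tsum_of_injective hinj _
      _ ≤ δ := hF
  calc (⨅ (t : ℕ → Set (EuclideanSpace ℝ (Fin N)))
        (_ : {x : EuclideanSpace ℝ (Fin N) | (∀ i, ⌊x i⌋ = k i) ∧
          ∀ m' : ℕ, ∃ n, m' ≤ n ∧ (Kc U (pre (codeSeq N hN x) n) : ℝ) < D / N * n + c}
            ⊆ ⋃ n, t n)
        (_ : ∀ n, EMetric.diam (t n) ≤ r),
          ∑' n, ⨆ _ : (t n).Nonempty, EMetric.diam (t n) ^ D)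
      ≤ ∑' i, ⨆ _ : (G (e i)).Nonempty, EMetric.diam (G (e i)) ^ D := by
        refine le_trans (iInf_le _ (fun i => G (e i))) ?_
        refine le_trans (iInf_le _ hcov) ?_
        exact iInf_le _ hdiam
    _ ≤ ∑' i, Set.indicator {t : BStr | t ∈ B ∧ m ≤ t.length} (fun t => C * w t) (e i) :=
        ENNReal.tsum_le_tsum fun i => hterm (e i)
    _ ≤ ∑' t : BStr, Set.indicator {t : BStr | t ∈ B ∧ m ≤ t.length} (fun t => C * w t) t := by
        exact ENNReal.tsum_comp_le_tsum_of_injective (fun a b hab => Φ.injective hab) _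
    _ = ∑' t : {t : BStr // t ∈ B ∧ m ≤ t.length}, C * w (t : BStr) := by
        rw [← tsum_subtype {t : BStr | t ∈ B ∧ m ≤ t.length} (fun t => C * w t)]
        rfl
    _ = C * ∑' t : {t : BStr // t ∈ B ∧ m ≤ t.length}, w (t : BStr) := ENNReal.tsum_mul_left
    _ ≤ C * δ := mul_le_mul_right htailsum _
    _ ≤ (ε : ℝ≥0∞) := by rw [hδ]; exact ENNReal.mul_div_le

lemma chaitin_implies_weak {U : Computer} {d : ℝ} (hd : 0 ≤ d) {α : ℕ → Bool}
    (h : ChaitinRandom U d α) : WeaklyChaitinRandom U d α := by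
  obtain ⟨M, hM⟩ := Filter.eventually_atTop.1 (h.eventually_ge_atTop 0)
  refine ⟨d * M, fun n => ?_⟩
  by_cases hn : M ≤ n
  · have h1 := hM n hn
    have h2 : 0 ≤ d * M := mul_nonneg hd (Nat.cast_nonneg M)
    linarith
  · push_neg at hn
    have h1 : d * n ≤ d * M := mul_le_mul_of_nonneg_left (by exact_mod_cast hn.le) hd
    have h2 : (0:ℝ) ≤ (Kc U (pre α n) : ℝ) := Nat.cast_nonneg _
    linarith

/-- For a computable real `D ≥ 0`, the sets of non Chaitin
`(D/N)`-random and non weakly Chaitin `(D/N)`-random points of `ℝ^N` are Borel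
and have zero `D`-dimensional Hausdorff measure. -/
theorem hausdorffMeasure_nonrandom_eq_zero
    (U : Computer) (hU : IsUniversal U) (N : ℕ) (hN : 0 < N)
    (D : ℝ) (hD0 : 0 ≤ D) (hDc : ComputableReal D) :
    MeasurableSet {x : EuclideanSpace ℝ (Fin N) | ¬ ChaitinRandom U (D / N) (codeSeq N hN x)} ∧
    MeasurableSet {x : EuclideanSpace ℝ (Fin N) |
      ¬ WeaklyChaitinRandom U (D / N) (codeSeq N hN x)} ∧
    μH[D] {x : EuclideanSpace ℝ (Fin N) | ¬ ChaitinRandom U (D / N) (codeSeq N hN x)} = 0 ∧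
    μH[D] {x : EuclideanSpace ℝ (Fin N) |
      ¬ WeaklyChaitinRandom U (D / N) (codeSeq N hN x)} = 0 := by
  have hd0 : 0 ≤ D / N := div_nonneg hD0 (Nat.cast_nonneg N)
  have hms1 : MeasurableSet
      {x : EuclideanSpace ℝ (Fin N) | ¬ ChaitinRandom U (D / N) (codeSeq N hN x)} := by
    have : {x : EuclideanSpace ℝ (Fin N) | ¬ ChaitinRandom U (D / N) (codeSeq N hN x)}
        = {x : EuclideanSpace ℝ (Fin N) | ChaitinRandom U (D / N) (codeSeq N hN x)}ᶜ := rfl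
    rw [this]
    exact (measurableSet_chaitin U N hN (D / N)).compl
  have hms2 : MeasurableSet
      {x : EuclideanSpace ℝ (Fin N) | ¬ WeaklyChaitinRandom U (D / N) (codeSeq N hN x)} := by
    have : {x : EuclideanSpace ℝ (Fin N) | ¬ WeaklyChaitinRandom U (D / N) (codeSeq N hN x)}
        = {x : EuclideanSpace ℝ (Fin N) | WeaklyChaitinRandom U (D / N) (codeSeq N hN x)}ᶜ := rfl
    rw [this]
    exact (measurableSet_weak U N hN (D / N)).compl
  have hz1 : μH[D] {x : EuclideanSpace ℝ (Fin N)
      | ¬ ChaitinRandom U (D / N) (codeSeq N hN x)} = 0 := by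
    have hsub : {x : EuclideanSpace ℝ (Fin N) | ¬ ChaitinRandom U (D / N) (codeSeq N hN x)}
        ⊆ ⋃ (c : ℕ), ⋃ (k : Fin N → ℤ),
            {x : EuclideanSpace ℝ (Fin N) | (∀ i, ⌊x i⌋ = k i) ∧
              ∀ m : ℕ, ∃ n, m ≤ n ∧
                (Kc U (pre (codeSeq N hN x) n) : ℝ) < D / N * n + (c:ℕ)} := by
      intro x hx
      simp only [Set.mem_setOf_eq] at hx
      unfold ChaitinRandom at hx
      rw [Filter.tendsto_atTop_atTop] at hx
      push_neg at hx
      obtain ⟨b, hb⟩ := hx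
      refine Set.mem_iUnion.2 ⟨⌈b⌉₊, Set.mem_iUnion.2 ⟨fun i => ⌊x i⌋, ?_⟩⟩
      refine ⟨fun i => rfl, fun m => ?_⟩
      obtain ⟨n, hn, hlt⟩ := hb m
      refine ⟨n, hn, ?_⟩
      have hcb : b ≤ (⌈b⌉₊ : ℝ) := Nat.le_ceil b
      linarith
    exact MeasureTheory.measure_mono_null hsub
      (MeasureTheory.measure_iUnion_null fun c =>
        MeasureTheory.measure_iUnion_null fun k => mz_cyl hU hN hD0 c k)
  refine ⟨hms1, hms2, hz1, ?_⟩
  refine MeasureTheory.measure_mono_null ?_ hz1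
  intro x hx hch
  exact hx (chaitin_implies_weak hd0 hch)
end

section
/- Let D ≥ 0 be any real number. Define T^3_D := { x ∈ ℝ^N : code_N(x) is not semi (D/N)-random }. Then T^3_D is a Borel set and ℋ^D(T^3_D) = 0, where ℋ^D is D-dimensional Hausdorff outer measure on ℝ^N. -/
open scoped ENNReal MeasureTheory

open Filter Topology MeasureTheory

def dtl (p : BStr) : BStr :=
  (List.range (p.length - (p.length / 2 + 1))).map fun i => p.getD (p.length / 2 + 1 + i) false
def gId (p : BStr) : Option BStr :=
  if p.length % 2 = 1 ∧ p = ((List.range (p.length / 2)).map fun _ => true) ++ false :: dtl p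
  then some (dtl p) else none
theorem dtl_eq (p : BStr) : dtl p = p.drop (p.length / 2 + 1) := by
  apply List.ext_getElem
  · simp [dtl]
  · intro i h1 h2
    simp [dtl] at h1 ⊢
    rw [List.getElem?_eq_getElem (by omega)]
    rfl
theorem dtl_primrec : Primrec dtl := by
  unfold dtl
  exact Primrec.list_map
    (Primrec.list_range.comp (Primrec.nat_sub.comp Primrec.list_length
      (Primrec.succ.comp (Primrec.nat_div.comp Primrec.list_length (Primrec.const 2)))))
    ((Primrec.list_getD false).comp₂ Primrec.fst
      (Primrec.nat_add.comp₂
        (Primrec.succ.comp₂ (Primrec.nat_div.comp₂ (Primrec.list_length.comp₂ Primrec.fst) (Primrec₂.const 2)))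
        Primrec.snd))

theorem gId_primrec : Primrec gId := by
  unfold gId
  refine Primrec.ite ?_ (Primrec.option_some.comp dtl_primrec) (Primrec.const none)
  refine PrimrecPred.and ?_ ?_
  · exact (Primrec.eq.comp (Primrec.nat_mod.comp Primrec.list_length (Primrec.const 2)) (Primrec.const 1))
  · refine Primrec.eq.comp Primrec.id ?_
    refine Primrec.list_append.comp ?_ (Primrec.list_cons.comp (Primrec.const false) dtl_primrec)
    exact Primrec.list_map (Primrec.list_range.comp (Primrec.nat_div.comp Primrec.list_length (Primrec.const 2)))
      (Primrec₂.const true)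
theorem gId_spec (s : BStr) : gId (List.replicate s.length true ++ false :: s) = some s := by
  have hlen : (List.replicate s.length true ++ false :: s).length = 2 * s.length + 1 := by
    simp; omega
  have hdiv : (List.replicate s.length true ++ false :: s).length / 2 = s.length := by
    rw [hlen]; omega
  have hdrop : (List.replicate s.length true ++ false :: s).drop (s.length + 1) = s := by
    rw [List.drop_append]
    simp
  have hdtl : dtl (List.replicate s.length true ++ false :: s) = s := by
    rw [dtl_eq, hdiv, hdrop]
  rw [gId, hdiv, hdtl, hlen]
  simp [List.map_const']
theorem gId_dom {p : BStr} (h : (gId p).isSome) :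
    p.length % 2 = 1 ∧ p = List.replicate (p.length / 2) true ++ false :: p.drop (p.length / 2 + 1) := by
  rw [gId] at h
  split at h
  · rename_i hc
    obtain ⟨h1, h2⟩ := hc
    refine ⟨h1, ?_⟩
    rw [← dtl_eq]
    simpa [List.map_const'] using h2
  · simp at h

noncomputable def Cid : Computer where
  f := fun p => (gId p : Part BStr)
  partrec := Computable.ofOption (gId_primrec.to_comp)
  prefixFree := by
    intro p hp q hq hpq
    obtain ⟨y, hy⟩ := (PFun.mem_dom _ _).mp hp
    obtain ⟨z, hz⟩ := (PFun.mem_dom _ _).mp hq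
    have hyp : (gId p).isSome := by rw [Option.mem_def.mp (Part.mem_ofOption.mp hy)]; rfl
    have hzq : (gId q).isSome := by rw [Option.mem_def.mp (Part.mem_ofOption.mp hz)]; rfl
    obtain ⟨hp1, hp2⟩ := gId_dom hyp
    obtain ⟨hq1, hq2⟩ := gId_dom hzq
    have hle : p.length ≤ q.length := hpq.length_le
    by_cases heq : p.length = q.length
    · exact hpq.eq_of_length heq
    · exfalso
      have hklt : p.length / 2 < q.length / 2 := by omega
      have h1 : p[p.length / 2]'(by omega) = false := by
        rw [List.getElem_of_eq hp2 (by omega)]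
        rw [List.getElem_append_right (by simp)]
        simp
      have h2 : q[p.length / 2]'(by omega) = true := by
        rw [List.getElem_of_eq hq2 (by omega)]
        rw [List.getElem_append_left (by simpa using hklt)]
        simp
      have := hpq.getElem (i := p.length / 2) (by omega)
      rw [h1, h2] at this
      exact Bool.false_ne_true this

theorem Cid_apply (s : BStr) :
    Cid.f (List.replicate s.length true ++ false :: s) = Part.some s := by
  show ((gId _ : Option BStr) : Part BStr) = _
  rw [gId_spec]
  rfl

theorem kc_mem (U : Computer) (hdom : ∀ s, ∃ p, U.f p = Part.some s) (s : BStr) :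
    ∃ p : BStr, U.f p = Part.some s ∧ p.length = Kc U s := by
  have hne : { k | ∃ p : BStr, U.f p = Part.some s ∧ p.length = k }.Nonempty := by
    obtain ⟨p, hp⟩ := hdom s
    exact ⟨p.length, p, hp, rfl⟩
  exact Nat.sInf_mem hne

theorem kc_le (U : Computer) {s : BStr} {p : BStr} (hp : U.f p = Part.some s) :
    Kc U s ≤ p.length :=
  Nat.sInf_le ⟨p, hp, rfl⟩

theorem lenlt_finite (m : ℕ) :
    {p : BStr | p.length < m}.Finite ∧ {p : BStr | p.length < m}.ncard < 2 ^ m := by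
  induction m with
  | zero =>
    have : {p : BStr | p.length < 0} = ∅ := by ext p; simp
    rw [this]; simp
  | succ m ih =>
    have hdecomp : {p : BStr | p.length < m + 1} =
        insert [] ((List.cons true '' {p : BStr | p.length < m}) ∪
          (List.cons false '' {p : BStr | p.length < m})) := by
      ext p
      cases p with
      | nil => simp
      | cons b t =>
        cases b <;> simp [Nat.succ_lt_succ_iff] <;> aesop
    constructor
    · rw [hdecomp]
      exact (((ih.1.image _).union (ih.1.image _)).insert _)
    · rw [hdecomp]
      calc (insert ([]:BStr) ((List.cons true '' {p : BStr | p.length < m}) ∪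
          (List.cons false '' {p : BStr | p.length < m}))).ncard
          ≤ ((List.cons true '' {p : BStr | p.length < m}) ∪
          (List.cons false '' {p : BStr | p.length < m})).ncard + 1 := Set.ncard_insert_le _ _
        _ ≤ ((List.cons true '' {p : BStr | p.length < m}).ncard +
            (List.cons false '' {p : BStr | p.length < m}).ncard) + 1 := by
            gcongr; exact Set.ncard_union_le _ _
        _ ≤ ({p : BStr | p.length < m}.ncard + {p : BStr | p.length < m}.ncard) + 1 := by
            have := Set.ncard_image_le (f := List.cons true) ih.1
            have := Set.ncard_image_le (f := List.cons false) ih.1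
            omega
        _ < 2 ^ (m + 1) := by have := ih.2; omega

theorem kc_lt_finite (U : Computer) (hdom : ∀ s, ∃ p, U.f p = Part.some s) (m : ℕ) :
    {s : BStr | Kc U s < m}.Finite ∧ {s : BStr | Kc U s < m}.ncard < 2 ^ m := by
  classical
  set w : BStr → BStr := fun s => (kc_mem U hdom s).choose with hw
  have hwspec : ∀ s, U.f (w s) = Part.some s ∧ (w s).length = Kc U s :=
    fun s => (kc_mem U hdom s).choose_spec
  have hmap : ∀ s ∈ {s : BStr | Kc U s < m}, w s ∈ {p : BStr | p.length < m} := by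
    intro s hs
    simpa [(hwspec s).2] using hs
  have hinj : Set.InjOn w {s : BStr | Kc U s < m} := by
    intro s hs s' hs' he
    have h1 := (hwspec s).1
    have h2 := (hwspec s').1
    rw [he, h2] at h1
    exact (Part.some_inj.mp h1).symm
  refine ⟨?_, ?_⟩
  · refine Set.Finite.of_finite_image ?_ hinj
    exact (lenlt_finite m).1.subset (Set.image_subset_iff.mpr hmap)
  · exact lt_of_le_of_lt (Set.ncard_le_ncard_of_injOn w hmap hinj (lenlt_finite m).1)
      (lenlt_finite m).2

theorem floor_double (a : ℝ) : ⌊2 * a⌋ = 2 * ⌊a⌋ ∨ ⌊2 * a⌋ = 2 * ⌊a⌋ + 1 := by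
  have h1 : (2 * ⌊a⌋ : ℤ) ≤ ⌊2 * a⌋ := by
    apply Int.le_floor.mpr
    push_cast
    nlinarith [Int.floor_le a]
  have h2 : ⌊2 * a⌋ < 2 * ⌊a⌋ + 2 := by
    apply Int.floor_lt.mpr
    push_cast
    nlinarith [Int.lt_floor_add_one a]
  omega

theorem floor_eq_of_binExp (y y' : ℝ) (k : ℕ) (h : ∀ j < k, binExp y j = binExp y' j) :
    ⌊Int.fract y * 2 ^ k⌋ = ⌊Int.fract y' * 2 ^ k⌋ := by
  induction k with
  | zero =>
    simp only [pow_zero, mul_one]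
    rw [Int.floor_eq_zero_iff.mpr ⟨Int.fract_nonneg y, Int.fract_lt_one y⟩,
      Int.floor_eq_zero_iff.mpr ⟨Int.fract_nonneg y', Int.fract_lt_one y'⟩]
  | succ k ih =>
    have ihe : ⌊Int.fract y * 2 ^ k⌋ = ⌊Int.fract y' * 2 ^ k⌋ :=
      ih (fun j hj => h j (Nat.lt_succ_of_lt hj))
    have e1 : Int.fract y * 2 ^ (k + 1) = 2 * (Int.fract y * 2 ^ k) := by ring
    have e2 : Int.fract y' * 2 ^ (k + 1) = 2 * (Int.fract y' * 2 ^ k) := by ring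
    have hb := h k (Nat.lt_succ_self k)
    simp only [binExp, decide_eq_decide] at hb
    have hm : ⌊Int.fract y * 2 ^ (k + 1)⌋ % 2 = ⌊Int.fract y' * 2 ^ (k + 1)⌋ % 2 := by
      rcases Int.emod_two_eq ⌊Int.fract y * 2 ^ (k + 1)⌋ with h1 | h1 <;>
      rcases Int.emod_two_eq ⌊Int.fract y' * 2 ^ (k + 1)⌋ with h2 | h2 <;> omega
    rw [e1, e2] at hm ⊢
    rcases floor_double (Int.fract y * 2 ^ k) with hc1 | hc1 <;>
    rcases floor_double (Int.fract y' * 2 ^ k) with hc2 | hc2 <;> omega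

theorem fract_dist_of_binExp (y y' : ℝ) (k : ℕ) (h : ∀ j < k, binExp y j = binExp y' j) :
    |Int.fract y - Int.fract y'| ≤ (2 : ℝ)⁻¹ ^ k := by
  have hf := floor_eq_of_binExp y y' k h
  set t := ⌊Int.fract y * 2 ^ k⌋
  have h1 : (t : ℝ) ≤ Int.fract y * 2 ^ k := Int.floor_le _
  have h2 : Int.fract y * 2 ^ k < t + 1 := Int.lt_floor_add_one _
  have h3 : (t : ℝ) ≤ Int.fract y' * 2 ^ k := hf ▸ Int.floor_le _
  have h4 : Int.fract y' * 2 ^ k < t + 1 := by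
    rw [hf]; exact Int.lt_floor_add_one _
  have hp : (0:ℝ) < 2 ^ k := by positivity
  rw [abs_sub_le_iff]
  constructor <;> rw [inv_pow, inv_eq_one_div, le_div_iff₀ hp] <;> nlinarith

def cube (N : ℕ) (v : Fin N → ℤ) : Set (EuclideanSpace ℝ (Fin N)) :=
  {x | ∀ i, (v i : ℝ) ≤ x i ∧ x i < v i + 1}

theorem cube_mem_floor (N : ℕ) (x : EuclideanSpace ℝ (Fin N)) :
    x ∈ cube N (fun i => ⌊x i⌋) := fun i => ⟨Int.floor_le _, Int.lt_floor_add_one _⟩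

theorem fract_eq_on_cube {N : ℕ} {v : Fin N → ℤ} {x : EuclideanSpace ℝ (Fin N)}
    (h : x ∈ cube N v) (i : Fin N) : Int.fract (x i) = x i - v i := by
  have : ⌊x i⌋ = v i := Int.floor_eq_iff.mpr ⟨(h i).1, (h i).2⟩
  rw [Int.fract, this]

theorem pre_eq_imp {α β : ℕ → Bool} {n : ℕ} (h : pre α n = pre β n) {j : ℕ} (hj : j < n) :
    α j = β j := by
  have h1 : (pre α n)[j]'(by simp [pre]; omega) = α j := by simp [pre]
  have h2 : (pre β n)[j]'(by simp [pre]; omega) = β j := by simp [pre]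
  rw [← h1, List.getElem_of_eq h (by simp [pre]; omega), h2]

theorem coord_digits {N : ℕ} (hN : 0 < N) {x x' : EuclideanSpace ℝ (Fin N)} {n : ℕ}
    (h : ∀ j < n, codeSeq N hN x j = codeSeq N hN x' j) (i : Fin N) {q : ℕ} (hq : q < n / N) :
    binExp (x i) q = binExp (x' i) q := by
  have hjn : i.val + q * N < n := by
    have h1 : (q + 1) * N ≤ (n / N) * N := Nat.mul_le_mul_right N hq
    have h2 : (n / N) * N ≤ n := Nat.div_mul_le_self n N
    have h3 : i.val < N := i.isLt
    nlinarith
  have hmod : (i.val + q * N) % N = i.val := by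
    rw [Nat.add_mul_mod_self_right, Nat.mod_eq_of_lt i.isLt]
  have hdivj : (i.val + q * N) / N = q := by
    rw [Nat.add_mul_div_right _ _ hN, Nat.div_eq_of_lt i.isLt, Nat.zero_add]
  have hfin : (⟨(i.val + q * N) % N, Nat.mod_lt _ hN⟩ : Fin N) = i := Fin.ext hmod
  have := h (i.val + q * N) hjn
  rw [codeSeq, codeSeq, hfin, hdivj] at this
  exact this

theorem dist_le_of_pre_eq {N : ℕ} (hN : 0 < N) {x x' : EuclideanSpace ℝ (Fin N)}
    {v : Fin N → ℤ} {n : ℕ} (hx : x ∈ cube N v) (hx' : x' ∈ cube N v)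
    (h : pre (codeSeq N hN x) n = pre (codeSeq N hN x') n) :
    dist x x' ≤ Real.sqrt N * (2 : ℝ)⁻¹ ^ (n / N) := by
  have hcoord : ∀ i : Fin N, |x i - x' i| ≤ (2 : ℝ)⁻¹ ^ (n / N) := by
    intro i
    have h1 : Int.fract (x i) = x i - v i := fract_eq_on_cube hx i
    have h2 : Int.fract (x' i) = x' i - v i := fract_eq_on_cube hx' i
    have h3 := fract_dist_of_binExp (x i) (x' i) (n / N)
      (fun q hq => coord_digits hN (fun j hj => pre_eq_imp h hj) i hq)
    rw [h1, h2] at h3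
    convert h3 using 2
    ring
  have hc : (0:ℝ) ≤ (2 : ℝ)⁻¹ ^ (n / N) := by positivity
  rw [EuclideanSpace.dist_eq]
  have hsum : ∑ i, dist (x i) (x' i) ^ 2 ≤ (N : ℝ) * ((2 : ℝ)⁻¹ ^ (n / N))^2 := by
    calc ∑ i, dist (x i) (x' i) ^ 2 ≤ ∑ _i : Fin N, ((2 : ℝ)⁻¹ ^ (n / N))^2 := by
          apply Finset.sum_le_sum
          intro i _
          have := hcoord i
          rw [Real.dist_eq]
          nlinarith [abs_nonneg (x i - x' i)]
      _ = (N : ℝ) * ((2 : ℝ)⁻¹ ^ (n / N))^2 := by simp [mul_comm]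
  calc Real.sqrt (∑ i, dist (x i) (x' i) ^ 2) ≤ Real.sqrt ((N : ℝ) * ((2 : ℝ)⁻¹ ^ (n / N))^2) :=
        Real.sqrt_le_sqrt hsum
    _ = Real.sqrt N * (2 : ℝ)⁻¹ ^ (n / N) := by
        rw [Real.sqrt_mul (by positivity), Real.sqrt_sq hc]

theorem measurable_digit {N : ℕ} (hN : 0 < N) (j : ℕ) (b : Bool) :
    MeasurableSet {x : EuclideanSpace ℝ (Fin N) | codeSeq N hN x j = b} := by
  have hφ : Measurable fun x : EuclideanSpace ℝ (Fin N) =>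
      ⌊Int.fract (x ⟨j % N, Nat.mod_lt j hN⟩) * 2 ^ (j / N + 1)⌋ := by
    apply Int.measurable_floor.comp
    exact ((EuclideanSpace.proj (𝕜 := ℝ) _).continuous.measurable.fract.mul_const _)
  have : {x : EuclideanSpace ℝ (Fin N) | codeSeq N hN x j = b} =
      (fun x : EuclideanSpace ℝ (Fin N) =>
        ⌊Int.fract (x ⟨j % N, Nat.mod_lt j hN⟩) * 2 ^ (j / N + 1)⌋) ⁻¹'
        {z : ℤ | decide (z % 2 = 1) = b} := by
    ext x; rfl
  rw [this]
  exact hφ (Set.to_countable _).measurableSet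

theorem measurable_cyl {N : ℕ} (hN : 0 < N) (n : ℕ) (s : BStr) :
    MeasurableSet {x : EuclideanSpace ℝ (Fin N) | pre (codeSeq N hN x) n = s} := by
  by_cases hlen : s.length = n
  · have hset : {x : EuclideanSpace ℝ (Fin N) | pre (codeSeq N hN x) n = s} =
        ⋂ j : Fin n, {x | codeSeq N hN x j.val = s[j.val]'(by omega)} := by
      ext x
      simp only [Set.mem_iInter, Set.mem_setOf_eq]
      constructor
      · intro h j
        have h1 : (pre (codeSeq N hN x) n)[j.val]'(by simp [pre]) = codeSeq N hN x j.val := by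
          simp [pre]
        rw [← h1, List.getElem_of_eq h (by simp [pre])]
      · intro h
        apply List.ext_getElem (by simp [pre]; omega)
        intro i h1 h2
        have : i < n := by simpa [pre] using h1
        simpa [pre] using h ⟨i, this⟩
    rw [hset]
    exact MeasurableSet.iInter fun j => measurable_digit hN j.val _
  · have : {x : EuclideanSpace ℝ (Fin N) | pre (codeSeq N hN x) n = s} = ∅ := by
      ext x
      simp only [Set.mem_setOf_eq, Set.mem_empty_iff_false, iff_false]
      intro h
      apply hlen
      rw [← h]
      simp [pre]
    rw [this]
    exact MeasurableSet.empty

theorem key_zero (U : Computer) (hdom : ∀ s, ∃ p, U.f p = Part.some s)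
    (N : ℕ) (hN : 0 < N) (D : ℝ) (hD0 : 0 ≤ D) (r : ℝ) (hr0 : 0 ≤ r) (hrd : r < D / N)
    (v : Fin N → ℤ) :
    μH[D] ({x : EuclideanSpace ℝ (Fin N) |
        ∀ m : ℕ, ∃ n, m ≤ n ∧ (Kc U (pre (codeSeq N hN x) n) : ℝ) < r * n} ∩ cube N v) = 0 := by
  classical
  set X := EuclideanSpace ℝ (Fin N)
  set A : Set X := {x : X |
      ∀ m : ℕ, ∃ n, m ≤ n ∧ (Kc U (pre (codeSeq N hN x) n) : ℝ) < r * n} ∩ cube N v with hA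
  set c : ℕ → ℝ≥0∞ := fun n => ENNReal.ofReal (Real.sqrt N * (2:ℝ)⁻¹ ^ (n / N)) with hc
  set g : ℕ → ℝ≥0∞ := fun n => 2 ^ (⌈r * n⌉₊ : ℕ) * (c n) ^ D with hg
  -- geometric bound on g
  have hθ : (2:ℝ≥0∞) ^ (r - D/N) < 1 := by
    have := ENNReal.rpow_lt_rpow_of_exponent_lt (x := 2) (by norm_num) (by norm_num)
      (show r - D/N < 0 by linarith)
    simpa using this
  have h2merge : ∀ a b : ℝ, (2:ℝ≥0∞)^a * 2^b = 2^(a+b) :=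
    fun a b => (ENNReal.rpow_add a b (by norm_num) (by norm_num)).symm
  set K : ℝ≥0∞ := (2:ℝ≥0∞)^(1 + D) * (ENNReal.ofReal (Real.sqrt N))^D with hK
  have hKne : K ≠ ⊤ := ENNReal.mul_ne_top
    (ENNReal.rpow_ne_top_of_nonneg (by linarith) (by norm_num))
    (ENNReal.rpow_ne_top_of_nonneg hD0 ENNReal.ofReal_ne_top)
  have hgle : ∀ n, g n ≤ K * ((2:ℝ≥0∞)^(r - D/N))^n := by
    intro n
    have h2 : ((2:ℝ≥0∞) ^ (⌈r * n⌉₊ : ℕ)) ≤ 2 ^ (r * n + 1) := by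
      rw [← ENNReal.rpow_natCast]
      exact ENNReal.rpow_le_rpow_of_exponent_le (by norm_num)
        (Nat.ceil_lt_add_one (by positivity)).le
    have hcn : c n = ENNReal.ofReal (Real.sqrt N) * (2:ℝ≥0∞) ^ (-((n / N : ℕ) : ℝ)) := by
      show ENNReal.ofReal (Real.sqrt N * (2:ℝ)⁻¹ ^ (n / N)) = _
      rw [ENNReal.ofReal_mul (Real.sqrt_nonneg _), ENNReal.ofReal_pow (by norm_num)]
      congr 1
      rw [ENNReal.ofReal_inv_of_pos (by norm_num), ENNReal.ofReal_ofNat,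
        ← ENNReal.rpow_neg_one, ← ENNReal.rpow_natCast ((2:ℝ≥0∞)^(-1:ℝ)) (n / N),
        ← ENNReal.rpow_mul]
      norm_num
    have hkreal : ((n:ℝ))/N - 1 ≤ ((n / N : ℕ) : ℝ) := by
      have h1 : N * (n / N) + n % N = n := Nat.div_add_mod n N
      have h2' : n % N < N := Nat.mod_lt n hN
      have h3 : (n:ℝ) < N * ((n / N : ℕ) : ℝ) + N := by
        have : n < N * (n / N) + N := by omega
        exact_mod_cast this
      have hNpos : (0:ℝ) < N := by exact_mod_cast hN
      rw [div_sub_one (by positivity), div_le_iff₀ hNpos]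
      nlinarith
    have hcd : (c n) ^ D ≤ (ENNReal.ofReal (Real.sqrt N))^D * (2:ℝ≥0∞)^((1 - (n:ℝ)/N)*D) := by
      rw [hcn, ENNReal.mul_rpow_of_nonneg _ _ hD0, ← ENNReal.rpow_mul]
      refine mul_le_mul_right ?_ _
      apply ENNReal.rpow_le_rpow_of_exponent_le (by norm_num)
      nlinarith
    calc g n = 2 ^ (⌈r * n⌉₊ : ℕ) * (c n) ^ D := rfl
      _ ≤ (2:ℝ≥0∞) ^ (r * n + 1) * ((ENNReal.ofReal (Real.sqrt N))^D *
            (2:ℝ≥0∞)^((1 - (n:ℝ)/N)*D)) := mul_le_mul' h2 hcd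
      _ = K * ((2:ℝ≥0∞)^(r - D/N))^n := by
          rw [← ENNReal.rpow_natCast ((2:ℝ≥0∞)^(r - D/N)) n, ← ENNReal.rpow_mul, hK]
          rw [mul_comm ((ENNReal.ofReal (Real.sqrt N))^D) ((2:ℝ≥0∞)^((1 - (n:ℝ)/N)*D)),
            ← mul_assoc, h2merge, mul_assoc ((2:ℝ≥0∞)^(1+D)) _ _,
            mul_comm ((ENNReal.ofReal (Real.sqrt N))^D) _, ← mul_assoc, h2merge]
          congr 2
          field_simp
          ring
  have hgsum : ∑' n, g n ≠ ⊤ := by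
    have h1 : ∑' n, g n ≤ K * (1 - (2:ℝ≥0∞)^(r - D/N))⁻¹ := by
      calc ∑' n, g n ≤ ∑' n, K * ((2:ℝ≥0∞)^(r - D/N))^n :=
            Summable.tsum_le_tsum hgle ENNReal.summable ENNReal.summable
        _ = K * ∑' n, ((2:ℝ≥0∞)^(r - D/N))^n := ENNReal.tsum_mul_left
        _ = K * (1 - (2:ℝ≥0∞)^(r - D/N))⁻¹ := by rw [ENNReal.tsum_geometric]
    refine ne_top_of_le_ne_top ?_ h1
    exact ENNReal.mul_ne_top hKne (ENNReal.inv_ne_top.mpr (tsub_pos_of_lt hθ).ne')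
  -- the coverings
  set SmF : ℕ → Set (ℕ × BStr) :=
    fun m => {q : ℕ × BStr | m ≤ q.1 ∧ q.2.length = q.1 ∧ (Kc U q.2 : ℝ) < r * q.1} with hSmF
  let t : ∀ m : ℕ, ↥(SmF m) → Set X := fun _ q => cube N v ∩ {x | pre (codeSeq N hN x) q.1.1 = q.1.2}
  have hdiam : ∀ m (q : ↥(SmF m)), EMetric.diam (t m q) ≤ c q.1.1 := by
    intro m q
    apply EMetric.diam_le
    intro x hx y hy
    rw [hc]
    refine (edist_le_ofReal (by positivity)).mpr ?_
    exact dist_le_of_pre_eq hN hx.1 hy.1 (hx.2.trans hy.2.symm)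
  have hcmono : ∀ {m n : ℕ}, m ≤ n → c n ≤ c m := by
    intro m n hmn
    apply ENNReal.ofReal_le_ofReal
    apply mul_le_mul_of_nonneg_left _ (Real.sqrt_nonneg _)
    exact pow_le_pow_of_le_one (by norm_num) (by norm_num) (Nat.div_le_div_right hmn)
  have hctend : Tendsto c atTop (𝓝 0) := by
    have h1 : Tendsto (fun k : ℕ => Real.sqrt N * (2:ℝ)⁻¹ ^ k) atTop (𝓝 (Real.sqrt N * 0)) :=
      (tendsto_pow_atTop_nhds_zero_of_lt_one (by norm_num) (by norm_num)).const_mul _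
    have h2 : Tendsto (fun m : ℕ => m / N) atTop atTop :=
      tendsto_atTop_atTop.mpr fun b => ⟨b * N, fun m hm => (Nat.le_div_iff_mul_le hN).mpr hm⟩
    have h3 : Tendsto (fun m : ℕ => Real.sqrt N * (2:ℝ)⁻¹ ^ (m / N)) atTop (𝓝 0) := by
      simpa only [mul_zero, Function.comp_def] using h1.comp h2
    have h4 := ENNReal.tendsto_ofReal h3
    rw [ENNReal.ofReal_zero] at h4
    exact h4
  have hcov : ∀ m, A ⊆ ⋃ q : ↥(SmF m), t m q := by
    intro m x hx
    obtain ⟨n, hmn, hkc⟩ := hx.1 m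
    refine Set.mem_iUnion.mpr ⟨⟨(n, pre (codeSeq N hN x) n), hmn, by simp [pre], hkc⟩, hx.2, rfl⟩
  have hmain := MeasureTheory.Measure.hausdorffMeasure_le_liminf_tsum D A c hctend t
    (Eventually.of_forall fun m q => (hdiam m q).trans (hcmono q.2.1))
    (Eventually.of_forall hcov)
  -- bound the stage sums
  have hstage : ∀ m, (∑' q : ↥(SmF m), EMetric.diam (t m q) ^ D) ≤ ∑' k, g (k + m) := by
    intro m
    have h1 : (∑' q : ↥(SmF m), EMetric.diam (t m q) ^ D) ≤ ∑' q : ↥(SmF m), (c q.1.1) ^ D :=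
      Summable.tsum_le_tsum (fun q => ENNReal.rpow_le_rpow (hdiam m q) hD0)
        ENNReal.summable ENNReal.summable
    have h2 : ∑' q : ↥(SmF m), (c q.1.1) ^ D
        = ∑' p : ℕ × BStr, (SmF m).indicator (fun p => (c p.1) ^ D) p := tsum_subtype (SmF m) (fun p => c p.1 ^ D)
    have h3 : ∀ n : ℕ, (∑' s : BStr, (SmF m).indicator (fun p => (c p.1) ^ D) (n, s))
        ≤ (if m ≤ n then g n else 0) := by
      intro n
      by_cases hmn : m ≤ n
      · rw [if_pos hmn]
        set KK : Set BStr := {s : BStr | Kc U s < ⌈r * n⌉₊} with hKK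
        have hsub : ∀ s : BStr, (SmF m).indicator (fun p => (c p.1) ^ D) (n, s)
            ≤ KK.indicator (fun _ => (c n) ^ D) s := by
          intro s
          by_cases hs : (n, s) ∈ SmF m
          · rw [Set.indicator_of_mem hs]
            have hmem : s ∈ KK := by
              have hlt : (Kc U s : ℝ) < ((⌈r * n⌉₊ : ℕ) : ℝ) :=
                lt_of_lt_of_le hs.2.2 (Nat.le_ceil _)
              exact_mod_cast hlt
            rw [Set.indicator_of_mem hmem]
          · rw [Set.indicator_of_notMem hs]
            exact zero_le
        haveI hfin : Fintype ↥KK := (kc_lt_finite U hdom ⌈r * n⌉₊).1.fintype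
        have hcard : (Fintype.card ↥KK : ℝ≥0∞) ≤ 2 ^ (⌈r * n⌉₊ : ℕ) := by
          have h4 : Fintype.card ↥KK = KK.ncard := by
            rw [← Nat.card_coe_set_eq, Nat.card_eq_fintype_card]
          have h5 : KK.ncard < 2 ^ ⌈r * n⌉₊ := (kc_lt_finite U hdom ⌈r * n⌉₊).2
          have h6 : Fintype.card ↥KK ≤ 2 ^ ⌈r * n⌉₊ := by omega
          exact_mod_cast Nat.cast_le.mpr h6
        calc (∑' s : BStr, (SmF m).indicator (fun p => (c p.1) ^ D) (n, s))
            ≤ ∑' s : BStr, KK.indicator (fun _ => (c n) ^ D) s :=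
              Summable.tsum_le_tsum hsub ENNReal.summable ENNReal.summable
          _ = ∑' _s : ↥KK, (c n) ^ D := (tsum_subtype KK _).symm
          _ = (Fintype.card ↥KK : ℝ≥0∞) * (c n) ^ D := by
              rw [tsum_fintype, Finset.sum_const, nsmul_eq_mul]
              simp
          _ ≤ 2 ^ (⌈r * n⌉₊ : ℕ) * (c n) ^ D := mul_le_mul_left hcard _
          _ = g n := rfl
      · have hzero : ∀ s : BStr, (SmF m).indicator (fun p => (c p.1) ^ D) (n, s) = 0 := by
          intro s
          exact Set.indicator_of_notMem (fun hs => hmn hs.1) _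
        simp [hzero, hmn]
    have h7 : ∑' n : ℕ, (if m ≤ n then g n else 0) = ∑' k, g (k + m) := by
      have hinj : Function.Injective (fun k : ℕ => k + m) := add_left_injective m
      rw [← hinj.tsum_eq (f := fun n => if m ≤ n then g n else 0) ?_]
      · apply tsum_congr
        intro k
        simp [Nat.le_add_left]
      · intro x hx
        simp only [Function.mem_support, ne_eq, ite_eq_right_iff, not_forall] at hx
        obtain ⟨hmx, -⟩ := hx
        exact ⟨x - m, by simp; omega⟩
    calc (∑' q : ↥(SmF m), EMetric.diam (t m q) ^ D)
        ≤ ∑' p : ℕ × BStr, (SmF m).indicator (fun p => (c p.1) ^ D) p := h1.trans_eq h2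
      _ = ∑' n : ℕ, ∑' s : BStr, (SmF m).indicator (fun p => (c p.1) ^ D) (n, s) :=
          ENNReal.tsum_prod'
      _ ≤ ∑' n : ℕ, (if m ≤ n then g n else 0) :=
          Summable.tsum_le_tsum h3 ENNReal.summable ENNReal.summable
      _ = ∑' k, g (k + m) := h7
  have htail : Tendsto (fun m => ∑' k, g (k + m)) atTop (𝓝 0) :=
    ENNReal.tendsto_sum_nat_add g hgsum
  have hlim : liminf (fun m => ∑' q : ↥(SmF m), EMetric.diam (t m q) ^ D) atTop = 0 := by
    apply le_antisymm _ zero_le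
    calc liminf (fun m => ∑' q : ↥(SmF m), EMetric.diam (t m q) ^ D) atTop
        ≤ liminf (fun m => ∑' k, g (k + m)) atTop :=
          liminf_le_liminf (Eventually.of_forall hstage)
      _ = 0 := htail.liminf_eq
  exact le_antisymm (hmain.trans_eq hlim) zero_le

/-- For any real `D ≥ 0`, the set of non semi `(D/N)`-random
points of `ℝ^N` is Borel and has zero `D`-dimensional Hausdorff measure. -/
theorem hausdorffMeasure_nonSemiRandom_eq_zero
    (U : Computer) (hU : IsUniversal U) (N : ℕ) (hN : 0 < N) (D : ℝ) (hD0 : 0 ≤ D) :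
    MeasurableSet {x : EuclideanSpace ℝ (Fin N) | ¬ SemiRandom U (D / N) (codeSeq N hN x)} ∧
    μH[D] {x : EuclideanSpace ℝ (Fin N) | ¬ SemiRandom U (D / N) (codeSeq N hN x)} = 0 := by
  classical
  obtain ⟨sim, hsim⟩ := hU Cid
  have hprog : ∀ s : BStr, ∃ q, U.f q = Part.some s ∧ q.length ≤ 2 * s.length + 1 + sim := by
    intro s
    obtain ⟨q, hq1, hq2⟩ := hsim (List.replicate s.length true ++ false :: s) s (Cid_apply s)
    refine ⟨q, hq1, ?_⟩
    simp only [List.length_append, List.length_replicate, List.length_cons] at hq2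
    omega
  have hdom : ∀ s : BStr, ∃ p, U.f p = Part.some s :=
    fun s => ⟨(hprog s).choose, (hprog s).choose_spec.1⟩
  have hkle : ∀ s : BStr, Kc U s ≤ 2 * s.length + 1 + sim := by
    intro s
    obtain ⟨q, hq1, hq2⟩ := hprog s
    exact (kc_le U hq1).trans hq2
  set X := EuclideanSpace ℝ (Fin N)
  set d : ℝ := D / N with hd
  have hd0 : 0 ≤ d := div_nonneg hD0 (Nat.cast_nonneg N)
  set u : X → ℕ → ℝ := fun x n => (Kc U (pre (codeSeq N hN x) n) : ℝ) / n with hu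
  have hub : ∀ (x : X) (n : ℕ), u x n ≤ 3 + sim := by
    intro x n
    rcases Nat.eq_zero_or_pos n with hn | hn
    · subst hn
      simp only [hu, Nat.cast_zero, div_zero]
      positivity
    · have hlen : (pre (codeSeq N hN x) n).length = n := by simp [pre]
      have h1 : (Kc U (pre (codeSeq N hN x) n) : ℝ) ≤ 2 * n + 1 + sim := by
        have := hkle (pre (codeSeq N hN x) n)
        rw [hlen] at this
        exact_mod_cast this
      have hnpos : (0:ℝ) < n := by exact_mod_cast hn
      simp only [hu]
      rw [div_le_iff₀ hnpos]
      have hn1 : (1:ℝ) ≤ n := by exact_mod_cast hn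
      have hsim0 : (0:ℝ) ≤ sim := by positivity
      nlinarith
  have hlb : ∀ (x : X) (n : ℕ), 0 ≤ u x n := fun x n => by simp only [hu]; positivity
  have hbddAbove : ∀ x : X, IsBoundedUnder (· ≤ ·) atTop (u x) :=
    fun x => isBoundedUnder_of ⟨3 + sim, hub x⟩
  have hbddBelow : ∀ x : X, IsBoundedUnder (· ≥ ·) atTop (u x) :=
    fun x => isBoundedUnder_of ⟨0, hlb x⟩
  have hcob : ∀ x : X, IsCoboundedUnder (· ≥ ·) atTop (u x) :=
    fun x => (hbddAbove x).isCoboundedUnder_ge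
  set B : ℚ → Set X := fun q => {x : X | 0 ≤ (q:ℝ) ∧ (q:ℝ) < d ∧
      ∀ m : ℕ, ∃ n, m ≤ n ∧ (Kc U (pre (codeSeq N hN x) n) : ℝ) < q * n} with hB
  have hSdesc : {x : X | ¬ SemiRandom U d (codeSeq N hN x)} = ⋃ q : ℚ, B q := by
    ext x
    simp only [Set.mem_setOf_eq, Set.mem_iUnion, SemiRandom, not_le, hB]
    constructor
    · intro hlt
      have h0 : 0 ≤ liminf (u x) atTop :=
        le_liminf_of_le (hcob x) (Eventually.of_forall (hlb x))
      obtain ⟨q, hq1, hq2⟩ := exists_rat_btwn hlt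
      have hfreq := frequently_lt_of_liminf_lt (hcob x) hq1
      rw [frequently_atTop] at hfreq
      refine ⟨q, by linarith, hq2, fun m => ?_⟩
      obtain ⟨n, hn1, hn2⟩ := hfreq (max m 1)
      have hnpos : (0:ℝ) < n := by
        have : 1 ≤ n := le_trans (le_max_right m 1) hn1
        exact_mod_cast this
      refine ⟨n, le_trans (le_max_left m 1) hn1, ?_⟩
      simp only [hu] at hn2
      rw [div_lt_iff₀ hnpos] at hn2
      exact hn2
    · rintro ⟨q, hq0, hqd, hfreq⟩
      have hfr : ∃ᶠ n in atTop, u x n ≤ q := by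
        rw [frequently_atTop]
        intro a
        obtain ⟨n, hn1, hn2⟩ := hfreq (max a 1)
        have hnpos : (0:ℝ) < n := by
          have : 1 ≤ n := le_trans (le_max_right a 1) hn1
          exact_mod_cast this
        refine ⟨n, le_trans (le_max_left a 1) hn1, ?_⟩
        simp only [hu]
        rw [div_le_iff₀ hnpos]
        exact le_of_lt hn2
      have hle := liminf_le_of_frequently_le hfr (hbddBelow x)
      exact lt_of_le_of_lt hle hqd
  constructor
  · rw [hSdesc]
    apply MeasurableSet.iUnion
    intro q
    by_cases hq : 0 ≤ (q:ℝ) ∧ (q:ℝ) < d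
    · have hBq : B q = ⋂ m : ℕ, ⋃ n : ℕ, ⋃ (_ : m ≤ n),
          ⋃ s : {s : BStr // (Kc U s : ℝ) < q * n},
            {x : X | pre (codeSeq N hN x) n = s.1} := by
        ext x
        simp only [hB, Set.mem_setOf_eq, Set.mem_iInter, Set.mem_iUnion]
        constructor
        · rintro ⟨-, -, h⟩ m
          obtain ⟨n, hn1, hn2⟩ := h m
          exact ⟨n, hn1, ⟨pre (codeSeq N hN x) n, hn2⟩, rfl⟩
        · intro h
          refine ⟨hq.1, hq.2, fun m => ?_⟩
          obtain ⟨n, hn1, s, hs⟩ := h m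
          exact ⟨n, hn1, by rw [hs]; exact s.2⟩
      rw [hBq]
      exact MeasurableSet.iInter fun m => MeasurableSet.iUnion fun n =>
        MeasurableSet.iUnion fun _ => MeasurableSet.iUnion fun s => measurable_cyl hN n s.1
    · have hBq : B q = ∅ := by
        ext x
        simp only [hB, Set.mem_setOf_eq, Set.mem_empty_iff_false, iff_false]
        tauto
      rw [hBq]
      exact MeasurableSet.empty
  · rw [hSdesc]
    refine le_antisymm ?_ zero_le
    refine le_trans (measure_iUnion_le _) ?_
    have hzero : ∀ q : ℚ, μH[D] (B q) = 0 := by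
      intro q
      by_cases hq : 0 ≤ (q:ℝ) ∧ (q:ℝ) < d
      · have hcover : B q ⊆ ⋃ v : Fin N → ℤ,
            ({x : X | ∀ m : ℕ, ∃ n, m ≤ n ∧ (Kc U (pre (codeSeq N hN x) n) : ℝ) < q * n}
              ∩ cube N v) := by
          intro x hx
          exact Set.mem_iUnion.mpr ⟨fun i => ⌊x i⌋, hx.2.2, cube_mem_floor N x⟩
        refine le_antisymm (le_trans (measure_mono hcover) ?_) zero_le
        refine le_trans (measure_iUnion_le _) ?_
        have hv : ∀ v : Fin N → ℤ,
            μH[D] ({x : X | ∀ m : ℕ, ∃ n, m ≤ n ∧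
              (Kc U (pre (codeSeq N hN x) n) : ℝ) < q * n} ∩ cube N v) = 0 :=
          fun v => key_zero U hdom N hN D hD0 q hq.1 (hd ▸ hq.2) v
        simp [hv]
      · have hBq : B q = ∅ := by
          ext x
          simp only [hB, Set.mem_setOf_eq, Set.mem_empty_iff_false, iff_false]
          tauto
        rw [hBq]
        exact measure_empty
    simp [hzero]
end

section
/- Let S_1,…,S_m be contractions on ℝ^N, each of the affine form S_i(x) = M_i x + v_i where M_i is an N×N matrix and v_i ∈ ℝ^N. If all matrix entries of each M_i and all components of each v_i are computable real numbers, then the invariant set F of S_1,…,S_m (the unique nonempty compact set with F = ∪_{i=1}^m S_i(F)) satisfies the r.e. condition. -/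
open scoped ENNReal MeasureTheory

namespace REaux


noncomputable def sval (q : ℕ) (x : ℕ × ℕ) : ℝ := ((x.1 : ℝ) - x.2) / 2 ^ q

def smul (x y : ℕ × ℕ) : ℕ × ℕ := (x.1 * y.1 + x.2 * y.2, x.1 * y.2 + x.2 * y.1)

def sshift (p : ℕ) (x : ℕ × ℕ) : ℕ × ℕ := (x.1 / 2 ^ p, x.2 / 2 ^ p)

lemma sval_add (q : ℕ) (x y : ℕ × ℕ) : sval q (x + y) = sval q x + sval q y := by
  simp only [sval, Prod.fst_add, Prod.snd_add]
  push_cast; ring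

lemma sval_zero (q : ℕ) : sval q 0 = 0 := by simp [sval]

lemma sval_sum (q : ℕ) {ι : Type*} (s : Finset ι) (f : ι → ℕ × ℕ) :
    sval q (∑ k ∈ s, f k) = ∑ k ∈ s, sval q (f k) := by
  classical
  induction s using Finset.cons_induction with
  | empty => simp [sval_zero]
  | cons a s ha ih => rw [Finset.sum_cons, Finset.sum_cons, sval_add, ih]

lemma sval_smul (q r : ℕ) (x y : ℕ × ℕ) :
    sval (q + r) (smul x y) = sval q x * sval r y := by
  have h2q : (2:ℝ) ^ q ≠ 0 := by positivity
  have h2r : (2:ℝ) ^ r ≠ 0 := by positivity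
  simp only [sval, smul, pow_add]
  push_cast
  field_simp
  ring

lemma sval_one (p : ℕ) : sval p (2 ^ p, 0) = 1 := by
  have h2 : (2:ℝ) ^ p ≠ 0 := by positivity
  simp [sval, h2]

lemma nat_div_real (p a : ℕ) : |((a / 2 ^ p : ℕ) : ℝ) - (a : ℝ) / 2 ^ p| ≤ 1 := by
  have h2 : (0:ℝ) < 2 ^ p := by positivity
  have hmod : (2 ^ p) * (a / 2 ^ p) + a % 2 ^ p = a := Nat.div_add_mod a (2 ^ p)
  have hlt : a % 2 ^ p < 2 ^ p := Nat.mod_lt _ (by positivity)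
  have hmodR : (2:ℝ) ^ p * ((a / 2 ^ p : ℕ) : ℝ) + ((a % 2 ^ p : ℕ) : ℝ) = (a : ℝ) := by
    exact_mod_cast congrArg (Nat.cast : ℕ → ℝ) hmod
  have heq : (a : ℝ) / 2 ^ p = ((a / 2 ^ p : ℕ) : ℝ) + ((a % 2 ^ p : ℕ) : ℝ) / 2 ^ p := by
    field_simp
    linarith [hmodR]
  rw [heq]
  have h0 : (0:ℝ) ≤ ((a % 2 ^ p : ℕ) : ℝ) / 2 ^ p := by positivity
  have h1 : ((a % 2 ^ p : ℕ) : ℝ) / 2 ^ p ≤ 1 := by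
    rw [div_le_one h2]
    exact_mod_cast hlt.le
  rw [abs_le]
  constructor <;> linarith

lemma sval_sshift (p : ℕ) (x : ℕ × ℕ) :
    |sval p (sshift p x) - sval (p + p) x| ≤ 2 / 2 ^ p := by
  have h2 : (0:ℝ) < 2 ^ p := by positivity
  have e : sval p (sshift p x) - sval (p + p) x =
      ((((x.1 / 2 ^ p : ℕ) : ℝ) - (x.1 : ℝ) / 2 ^ p) -
        (((x.2 / 2 ^ p : ℕ) : ℝ) - (x.2 : ℝ) / 2 ^ p)) / 2 ^ p := by
    simp only [sval, sshift, pow_add]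
    field_simp
    ring
  rw [e, abs_div, abs_of_pos h2, div_le_div_iff_of_pos_right h2]
  calc |(((x.1 / 2 ^ p : ℕ) : ℝ) - (x.1 : ℝ) / 2 ^ p) -
        (((x.2 / 2 ^ p : ℕ) : ℝ) - (x.2 : ℝ) / 2 ^ p)|
      ≤ |((x.1 / 2 ^ p : ℕ) : ℝ) - (x.1 : ℝ) / 2 ^ p| +
        |((x.2 / 2 ^ p : ℕ) : ℝ) - (x.2 : ℝ) / 2 ^ p| := abs_sub _ _
    _ ≤ 1 + 1 := add_le_add (nat_div_real p x.1) (nat_div_real p x.2)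
    _ = 2 := by norm_num



lemma computable_fin_sum {α : Type*} [Primcodable α] :
    ∀ {n : ℕ} (g : Fin n → α → ℕ), (∀ i, Computable (g i)) →
      Computable fun a => ∑ i, g i a := by
  intro n
  induction n with
  | zero => exact fun g _ => (Computable.const 0).of_eq (by simp)
  | succ n ih =>
    intro g hg
    exact ((Primrec.nat_add.to_comp.comp (hg 0) (ih (fun i => g i.succ)
      (fun i => hg i.succ)))).of_eq fun a => by rw [Fin.sum_univ_succ]

lemma computable_fin_sum_pair {α : Type*} [Primcodable α] {n : ℕ} (g : Fin n → α → ℕ × ℕ)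
    (hg : ∀ i, Computable (g i)) : Computable fun a => ∑ i, g i a := by
  have h1 := computable_fin_sum (fun i a => (g i a).1) fun i => Computable.fst.comp (hg i)
  have h2 := computable_fin_sum (fun i a => (g i a).2) fun i => Computable.snd.comp (hg i)
  exact (h1.pair h2).of_eq fun a => by
    refine Prod.ext ?_ ?_ <;> simp [Prod.fst_sum, Prod.snd_sum]

/-- all over `Fin n` of boolean tests -/
def finAll : ∀ {n : ℕ}, (Fin n → Bool) → Bool
  | 0, _ => true
  | _ + 1, g => g 0 && finAll fun i => g i.succ

lemma finAll_eq_true : ∀ {n : ℕ} (g : Fin n → Bool), finAll g = true ↔ ∀ i, g i = true := by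
  intro n
  induction n with
  | zero => intro g; simp [finAll]
  | succ n ih =>
    intro g
    simp [finAll, Bool.and_eq_true, ih, Fin.forall_fin_succ]

lemma computable_finAll {α : Type*} [Primcodable α] :
    ∀ {n : ℕ} (g : Fin n → α → Bool), (∀ i, Computable (g i)) →
      Computable fun a => finAll fun i => g i a := by
  intro n
  induction n with
  | zero => exact fun g _ => (Computable.const true).of_eq (by simp [finAll])
  | succ n ih =>
    intro g hg
    exact (((Primrec.dom_bool₂ (· && ·)).to_comp.comp (hg 0)
      (ih (fun i => g i.succ) fun i => hg i.succ))).of_eq fun a => by simp [finAll]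

lemma rePred_exists {α : Type*} [Primcodable α] {f : α → ℕ → Bool} (hf : Computable₂ f) :
    REPred fun a => ∃ k, f a k = true := by
  have h : Partrec fun a => Nat.rfind (fun k => (Part.some (f a k) : Part Bool)) := by
    have := Partrec.rfind (p := fun a => ((fun k => f a k : ℕ → Bool) : ℕ →. Bool)) hf.partrec₂
    exact this
  refine (Partrec.dom_re h).of_eq fun a => ?_
  refine Nat.rfind_dom.trans ?_
  constructor
  · rintro ⟨n, hn, -⟩
    exact ⟨n, (Part.mem_some_iff.1 hn).symm⟩
  · rintro ⟨k, hk⟩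
    exact ⟨k, by simp [Part.mem_some_iff, hk], fun {_} _ => trivial⟩



def bitsNum (f : ℕ → Bool) : ℕ → ℕ
  | 0 => 0
  | p + 1 => 2 * bitsNum f p + cond (f p) 1 0

lemma bitsNum_computable {f : ℕ → Bool} (hf : Computable f) : Computable (bitsNum f) := by
  have hstep : Computable₂ fun (_ : ℕ) (q : ℕ × ℕ) => 2 * q.2 + cond (f q.1) 1 0 := by
    have h1 : Computable fun q : ℕ × (ℕ × ℕ) => 2 * q.2.2 :=
      Primrec.nat_mul.to_comp.comp (Computable.const 2)
        (Computable.snd.comp Computable.snd)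
    have h2 : Computable fun q : ℕ × (ℕ × ℕ) => cond (f q.2.1) 1 0 :=
      Computable.cond (hf.comp (Computable.fst.comp Computable.snd))
        (Computable.const 1) (Computable.const 0)
    exact Primrec.nat_add.to_comp.comp h1 h2
  exact (Computable.nat_rec Computable.id (Computable.const 0) hstep).of_eq fun p => by
    induction p with
    | zero => rfl
    | succ p ih => exact congrArg (fun x => 2 * x + cond (f p) 1 0) ih

lemma bitsNum_val (f : ℕ → Bool) (p : ℕ) :
    (bitsNum f p : ℝ) / 2 ^ p = ∑ t ∈ Finset.range p, (if f t then (1:ℝ) else 0) / 2 ^ (t + 1) := by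
  induction p with
  | zero => simp [bitsNum]
  | succ p ih =>
    rw [Finset.sum_range_succ, ← ih]
    have h2 : (2:ℝ) ^ p ≠ 0 := by positivity
    have hb : (bitsNum f (p+1) : ℝ) = 2 * bitsNum f p + (if f p then (1:ℝ) else 0) := by
      rw [show bitsNum f (p+1) = 2 * bitsNum f p + cond (f p) 1 0 from rfl]
      push_cast
      cases f p <;> simp
    rw [hb]
    generalize (if f p = true then (1:ℝ) else 0) = b
    field_simp
    ring

lemma summable_bits (f : ℕ → Bool) :
    Summable fun n : ℕ => (if f n then (1:ℝ) else 0) / 2 ^ (n + 1) := by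
  have hg : Summable (fun n : ℕ => (1:ℝ) / 2 / 2 ^ n) := summable_geometric_two' 1
  refine Summable.of_nonneg_of_le (fun n => by positivity) (fun n => ?_) hg
  rw [pow_succ]
  rcases Bool.dichotomy (f n) with h | h <;> rw [h]
  · simp; positivity
  · simp only [if_true]
    rw [div_le_div_iff₀ (by positivity) (by positivity)]
    ring_nf
    nlinarith [pow_pos (show (0:ℝ) < 2 by norm_num) n]

lemma exists_nat_approx (D : ℝ) (h : ComputableReal D) :
    ∃ (zp zn : ℕ) (g : ℕ → ℕ), Computable g ∧
      ∀ p : ℕ, |D - (((zp : ℝ) - zn) + g p / 2 ^ p)| ≤ 1 / 2 ^ p := by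
  obtain ⟨f, hfc, hsum⟩ := h
  refine ⟨⌊D⌋.toNat, (-⌊D⌋).toNat, bitsNum f, bitsNum_computable hfc, fun p => ?_⟩
  have hz : ((⌊D⌋.toNat : ℝ) - ((-⌊D⌋).toNat : ℝ)) = (⌊D⌋ : ℝ) := by
    rcases le_or_gt 0 ⌊D⌋ with h0 | h0
    · have e1 : (-⌊D⌋).toNat = 0 := Int.toNat_of_nonpos (by omega)
      have e2 : ((⌊D⌋.toNat : ℕ) : ℝ) = ((⌊D⌋ : ℤ) : ℝ) := by
        exact_mod_cast congrArg (fun z : ℤ => (z : ℝ)) (Int.toNat_of_nonneg h0)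
      rw [e1, e2]; simp
    · have e1 : ⌊D⌋.toNat = 0 := Int.toNat_of_nonpos (by omega)
      have e2 : (((-⌊D⌋).toNat : ℕ) : ℝ) = ((-⌊D⌋ : ℤ) : ℝ) := by
        exact_mod_cast congrArg (fun z : ℤ => (z : ℝ)) (Int.toNat_of_nonneg (by omega))
      rw [e1, e2]; push_cast; ring
  have hS := summable_bits f
  have hsplit := Summable.sum_add_tsum_nat_add (f := fun n : ℕ => (if f n then (1:ℝ) else 0) / 2 ^ (n + 1)) p hS
  have htail0 : 0 ≤ ∑' t : ℕ, (if f (t + p) then (1:ℝ) else 0) / 2 ^ (t + p + 1) :=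
    tsum_nonneg fun t => by positivity
  have hgsum : Summable fun t : ℕ => (1:ℝ) / 2 ^ p / 2 / 2 ^ t := summable_geometric_two' _
  have htail1 : (∑' t : ℕ, (if f (t + p) then (1:ℝ) else 0) / 2 ^ (t + p + 1)) ≤ 1 / 2 ^ p := by
    have hle : ∀ t : ℕ, (if f (t + p) then (1:ℝ) else 0) / 2 ^ (t + p + 1)
        ≤ (1:ℝ) / 2 ^ p / 2 / 2 ^ t := by
      intro t
      have he : (2:ℝ) ^ (t + p + 1) = 2 ^ p * 2 * 2 ^ t := by
        rw [show t + p + 1 = p + 1 + t by ring, pow_add, pow_succ]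
      rw [he]
      rcases Bool.dichotomy (f (t + p)) with h | h <;> rw [h]
      · simp; positivity
      · simp only [if_true, div_div]
        exact le_refl _
    calc (∑' t : ℕ, (if f (t + p) then (1:ℝ) else 0) / 2 ^ (t + p + 1))
        ≤ ∑' t : ℕ, (1:ℝ) / 2 ^ p / 2 / 2 ^ t :=
          Summable.tsum_le_tsum hle (hS.comp_injective (add_left_injective p)) hgsum
      _ = 1 / 2 ^ p := tsum_geometric_two' _
  have hfract : Int.fract D - (bitsNum f p : ℝ) / 2 ^ p
      = ∑' t : ℕ, (if f (t + p) then (1:ℝ) else 0) / 2 ^ (t + p + 1) := by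
    rw [hsum, bitsNum_val, ← hsplit]
    ring
  rw [hz]
  have he2 : D - ((⌊D⌋:ℝ) + (bitsNum f p : ℝ) / 2 ^ p)
      = Int.fract D - (bitsNum f p : ℝ) / 2 ^ p := by
    rw [Int.fract]; ring
  rw [he2, hfract, abs_of_nonneg htail0]
  exact htail1



lemma modtest (p n A B V : ℕ) (hpn : n + 3 ≤ p) :
    (((A + 2 ^ (p - n - 1) + (2 ^ p - 1) * (B + V * 2 ^ (p - n))) % 2 ^ p < 2 ^ (p - n + 1)) ↔
      Int.fract ((((A:ℝ) - B) / 2 ^ p - V / 2 ^ n) + 1 / 2 ^ (n + 1)) < 2 / 2 ^ n) := by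
  have hp1 : (p - n - 1) + (n + 1) = p := by omega
  have hpn' : (p - n) + n = p := by omega
  set t : ℤ := (A : ℤ) + 2 ^ (p - n - 1) - B - V * 2 ^ (p - n) with ht
  have h2p : (0:ℝ) < 2 ^ p := by positivity
  have h2n : (0:ℝ) < 2 ^ n := by positivity
  have h2n1 : (0:ℝ) < 2 ^ (n+1) := by positivity
  -- real value identity
  have hreal : (((A:ℝ) - B) / 2 ^ p - V / 2 ^ n) + 1 / 2 ^ (n + 1) = (t : ℝ) / 2 ^ p := by
    have e1 : (2:ℝ) ^ (p - n - 1) = 2 ^ p / 2 ^ (n + 1) := by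
      rw [eq_div_iff (ne_of_gt h2n1), ← pow_add, hp1]
    have e2 : (2:ℝ) ^ (p - n) = 2 ^ p / 2 ^ n := by
      rw [eq_div_iff (ne_of_gt h2n), ← pow_add, hpn']
    rw [ht]
    push_cast
    rw [e1, e2]
    field_simp
    ring
  -- T mod 2^p equals t mod 2^p
  have hcast : ((A + 2 ^ (p - n - 1) + (2 ^ p - 1) * (B + V * 2 ^ (p - n)) : ℕ) : ℤ)
      = t + (2 ^ p : ℤ) * (B + V * 2 ^ (p - n)) := by
    have hsub : ((2 ^ p - 1 : ℕ) : ℤ) = (2 ^ p : ℤ) - 1 := by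
      push_cast [Nat.cast_sub Nat.one_le_two_pow]
      ring
    push_cast [hsub, ht]
    ring
  have hmodeq : ((A + 2 ^ (p - n - 1) + (2 ^ p - 1) * (B + V * 2 ^ (p - n))) % 2 ^ p : ℕ)
      = ((t % (2 ^ p : ℤ)).toNat) := by
    calc (A + 2 ^ (p - n - 1) + (2 ^ p - 1) * (B + V * 2 ^ (p - n))) % 2 ^ p
        = ((((A + 2 ^ (p - n - 1) + (2 ^ p - 1) * (B + V * 2 ^ (p - n))) % 2 ^ p : ℕ) : ℤ)).toNat :=
          (Int.toNat_natCast _).symm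
      _ = ((((A + 2 ^ (p - n - 1) + (2 ^ p - 1) * (B + V * 2 ^ (p - n))) : ℕ) : ℤ) % ((2:ℤ) ^ p)).toNat := by
          congr 1
      _ = ((t % (2 ^ p : ℤ)).toNat) := by rw [hcast, Int.add_mul_emod_self_left]
  have hmod0 : (0:ℤ) ≤ t % (2 ^ p : ℤ) := Int.emod_nonneg t (by positivity)
  have hmodlt : t % (2 ^ p : ℤ) < 2 ^ p := Int.emod_lt_of_pos t (by positivity)
  have hfract : Int.fract ((t : ℝ) / 2 ^ p) = ((t % (2 ^ p : ℤ) : ℤ) : ℝ) / 2 ^ p := by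
    have hdm : t = 2 ^ p * (t / 2 ^ p) + t % 2 ^ p := (Int.mul_ediv_add_emod t (2 ^ p)).symm
    have he : (t : ℝ) / 2 ^ p = ((t % (2 ^ p : ℤ) : ℤ) : ℝ) / 2 ^ p + ((t / (2 ^ p : ℤ) : ℤ) : ℝ) := by
      rw [div_add' _ _ _ (ne_of_gt h2p)]
      congr 1
      exact_mod_cast congrArg (fun z : ℤ => (z : ℝ))
        (by linarith [hdm] : t = t % 2 ^ p + t / 2 ^ p * 2 ^ p)
    rw [he, Int.fract_add_intCast, Int.fract_eq_self.2 ⟨by positivity, by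
      rw [div_lt_one h2p]; exact_mod_cast hmodlt⟩]
  have hb : ((t % (2 ^ p : ℤ)).toNat : ℝ) = ((t % (2 ^ p : ℤ) : ℤ) : ℝ) := by
    exact_mod_cast congrArg (fun z : ℤ => (z : ℝ)) (Int.toNat_of_nonneg hmod0)
  have hee : (2:ℝ) ^ (p - n + 1) * 2 ^ n = 2 ^ p * 2 := by
    rw [← pow_add, show p - n + 1 + n = p + 1 by omega, pow_succ]
  rw [hreal, hfract, hmodeq, div_lt_div_iff₀ h2p h2n]
  constructor
  · intro h
    have h' : ((t % (2 ^ p : ℤ)).toNat : ℝ) < 2 ^ (p - n + 1) := by exact_mod_cast h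
    rw [← hb]
    nlinarith [mul_lt_mul_of_pos_right h' h2n]
  · intro h
    rw [← hb] at h
    have h' : ((t % (2 ^ p : ℤ)).toNat : ℝ) < 2 ^ (p - n + 1) := by
      nlinarith [h2n]
    exact_mod_cast h'



/-- digit extraction from base-`m` encoding -/
lemma digits_lemma (m : ℕ) (hm : 0 < m) :
    ∀ (t d : ℕ) (σ : ℕ → ℕ), (∀ u, σ u < m) → t < d →
      (∑ u ∈ Finset.range d, σ u * m ^ u) / m ^ t % m = σ t := by
  intro t
  induction t with
  | zero =>
    intro d σ hσ htd
    obtain ⟨d', rfl⟩ : ∃ d', d = d' + 1 := ⟨d - 1, by omega⟩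
    rw [Finset.sum_range_succ' (fun u => σ u * m ^ u) d']
    simp only [pow_zero, mul_one, Nat.pow_zero, Nat.div_one]
    have : ∑ u ∈ Finset.range d', σ (u + 1) * m ^ (u + 1)
        = m * ∑ u ∈ Finset.range d', σ (u + 1) * m ^ u := by
      rw [Finset.mul_sum]
      congr 1; ext u; ring
    rw [this, add_comm, Nat.add_mul_mod_self_left]
    exact Nat.mod_eq_of_lt (hσ 0)
  | succ t ih =>
    intro d σ hσ htd
    obtain ⟨d', rfl⟩ : ∃ d', d = d' + 1 := ⟨d - 1, by omega⟩
    rw [Finset.sum_range_succ' (fun u => σ u * m ^ u) d']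
    have hsum : ∑ u ∈ Finset.range d', σ (u + 1) * m ^ (u + 1)
        = m * ∑ u ∈ Finset.range d', σ (u + 1) * m ^ u := by
      rw [Finset.mul_sum]; congr 1; ext u; ring
    rw [hsum]
    simp only [pow_zero, mul_one]
    have hdiv : (m * (∑ u ∈ Finset.range d', σ (u + 1) * m ^ u) + σ 0) / m ^ (t + 1)
        = (∑ u ∈ Finset.range d', σ (u + 1) * m ^ u) / m ^ t := by
      rw [show m ^ (t + 1) = m * m ^ t from by rw [pow_succ']]
      rw [← Nat.div_div_eq_div_mul, Nat.mul_add_div hm, Nat.div_eq_of_lt (hσ 0), add_zero]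
    rw [hdiv]
    exact ih d' (fun u => σ (u + 1)) (fun u => hσ (u + 1)) (by omega)




/-- numerator of the dyadic rational `0.s`: `strVal s = valnum s / 2 ^ s.length` -/
def valnum (l : BStr) : ℕ :=
  (l.foldr (fun b acc => ((cond b acc.2 0) + acc.1, 2 * acc.2)) (0, 1)).1

lemma valnum_aux (l : BStr) :
    (l.foldr (fun b acc => ((cond b acc.2 0) + acc.1, 2 * acc.2)) (0, 1)).2 = 2 ^ l.length := by
  induction l with
  | nil => rfl
  | cons b t ih => simp [List.foldr, ih, List.length_cons, pow_succ]; ring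

lemma strVal_eq (l : BStr) : strVal l = (valnum l : ℝ) / 2 ^ l.length := by
  induction l with
  | nil => simp [strVal, valnum]
  | cons b t ih =>
    have h2 : (2:ℝ) ^ t.length ≠ 0 := by positivity
    rw [strVal, ih]
    have : valnum (b :: t) = (cond b (2 ^ t.length) 0) + valnum t := by
      rw [valnum, List.foldr_cons, valnum_aux]
      rfl
    rw [this, List.length_cons]
    cases b
    · push_cast
      simp only [cond_false, Nat.cast_zero, zero_add]
      rw [pow_succ]
      field_simp
      try ring
    · push_cast
      simp only [cond_true]
      rw [pow_succ]
      field_simp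
      simp only [↓reduceIte, one_mul]
      push_cast
      ring

lemma valnum_lt (l : BStr) : valnum l < 2 ^ l.length := by
  induction l with
  | nil => norm_num [valnum]
  | cons b t ih =>
    have : valnum (b :: t) = (cond b (2 ^ t.length) 0) + valnum t := by
      rw [valnum, List.foldr_cons, valnum_aux]; rfl
    rw [this, List.length_cons, pow_succ]
    cases b <;> simp <;> omega

lemma primrec_valnum : Primrec valnum := by
  have hstep : Primrec₂ fun (_ : BStr) (q : Bool × (ℕ × ℕ)) =>
      ((cond q.1 q.2.2 0) + q.2.1, 2 * q.2.2) := by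
    have h1 : Primrec fun q : BStr × (Bool × (ℕ × ℕ)) => (cond q.2.1 q.2.2.2 0) + q.2.2.1 :=
      Primrec.nat_add.comp
        (Primrec.cond (Primrec.fst.comp Primrec.snd)
          (Primrec.snd.comp (Primrec.snd.comp Primrec.snd)) (Primrec.const 0))
        (Primrec.fst.comp (Primrec.snd.comp Primrec.snd))
    have h2 : Primrec fun q : BStr × (Bool × (ℕ × ℕ)) => 2 * q.2.2.2 :=
      Primrec.nat_mul.comp (Primrec.const 2) (Primrec.snd.comp (Primrec.snd.comp Primrec.snd))
    exact h1.pair h2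
  exact Primrec.fst.comp (Primrec.list_foldr Primrec.id (Primrec.const (0, 1)) hstep)

lemma primrec_smul : Primrec₂ smul := by
  have p11 : Primrec fun q : (ℕ × ℕ) × (ℕ × ℕ) => q.1.1 := Primrec.fst.comp Primrec.fst
  have p12 : Primrec fun q : (ℕ × ℕ) × (ℕ × ℕ) => q.1.2 := Primrec.snd.comp Primrec.fst
  have p21 : Primrec fun q : (ℕ × ℕ) × (ℕ × ℕ) => q.2.1 := Primrec.fst.comp Primrec.snd
  have p22 : Primrec fun q : (ℕ × ℕ) × (ℕ × ℕ) => q.2.2 := Primrec.snd.comp Primrec.snd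
  exact (Primrec.nat_add.comp (Primrec.nat_mul.comp p11 p21) (Primrec.nat_mul.comp p12 p22)).pair
    (Primrec.nat_add.comp (Primrec.nat_mul.comp p11 p22) (Primrec.nat_mul.comp p12 p21))

lemma primrec_pow2 : Primrec fun p : ℕ => 2 ^ p :=
  (Primrec₂.unpaired'.1 Nat.Primrec.pow).comp (Primrec.const 2) Primrec.id

lemma primrec_sshift : Primrec₂ sshift :=
  (Primrec.nat_div.comp (Primrec.fst.comp Primrec.snd) (primrec_pow2.comp Primrec.fst)).pair
    (Primrec.nat_div.comp (Primrec.snd.comp Primrec.snd) (primrec_pow2.comp Primrec.fst))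

lemma primrec_padd : Primrec₂ ((· + ·) : ℕ × ℕ → ℕ × ℕ → ℕ × ℕ) := by
  have h1 : Primrec fun q : (ℕ × ℕ) × (ℕ × ℕ) => q.1.1 + q.2.1 :=
    Primrec.nat_add.comp (Primrec.fst.comp Primrec.fst) (Primrec.fst.comp Primrec.snd)
  have h2 : Primrec fun q : (ℕ × ℕ) × (ℕ × ℕ) => q.1.2 + q.2.2 :=
    Primrec.nat_add.comp (Primrec.snd.comp Primrec.fst) (Primrec.snd.comp Primrec.snd)
  exact (h1.pair h2).of_eq fun q => rfl

section Machine

variable {N m : ℕ} (AM : Fin m → Fin N → Fin N → ℕ → ℕ × ℕ) (Av : Fin m → Fin N → ℕ → ℕ × ℕ)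
  (fo : ℕ → Fin m)

def stepA (p : ℕ) (i : Fin m) (y : List.Vector (ℕ × ℕ) N) : List.Vector (ℕ × ℕ) N :=
  List.Vector.ofFn fun j =>
    sshift p ((∑ k, smul (AM i j k p) (y.get k)) + smul (Av i j p) (2 ^ p, 0))

def runA (p w : ℕ) : ℕ → List.Vector (ℕ × ℕ) N
  | 0 => List.Vector.ofFn fun _ => (0, 0)
  | t + 1 => stepA AM Av p (fo (w / m ^ t % m)) (runA p w t)

def pOf (K n d : ℕ) : ℕ := K * (d + 1) + n + 3

def testT (p n A B V : ℕ) : ℕ := A + 2 ^ (p - n - 1) + (2 ^ p - 1) * (B + V * 2 ^ (p - n))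

def checkA (hN : 0 < N) (K aa bb : ℕ) (s : Fin N → BStr) (kk : ℕ) : Bool :=
  (finAll fun i : Fin N => decide ((s i).length = (s ⟨0, hN⟩).length)) &&
  (decide (bb * ((s ⟨0, hN⟩).length + 2 + aa) ≤ kk.unpair.1) &&
   finAll fun i : Fin N =>
     decide (testT (pOf K (s ⟨0, hN⟩).length kk.unpair.1) (s ⟨0, hN⟩).length
         ((runA AM Av fo (pOf K (s ⟨0, hN⟩).length kk.unpair.1) kk.unpair.2 kk.unpair.1).get i).1
         ((runA AM Av fo (pOf K (s ⟨0, hN⟩).length kk.unpair.1) kk.unpair.2 kk.unpair.1).get i).2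
         (valnum (s i)) % 2 ^ (pOf K (s ⟨0, hN⟩).length kk.unpair.1)
       < 2 ^ (pOf K (s ⟨0, hN⟩).length kk.unpair.1 - (s ⟨0, hN⟩).length + 1)))

variable {γ : Type} [Primcodable γ]

lemma computable_stepA (hAM : ∀ i j k, Computable (AM i j k)) (hAv : ∀ i j, Computable (Av i j))
    {P : γ → ℕ} {I : γ → Fin m} {Y : γ → List.Vector (ℕ × ℕ) N}
    (hP : Computable P) (hI : Computable I) (hY : Computable Y) :
    Computable fun x => stepA AM Av (P x) (I x) (Y x) := by
  have hcoord : ∀ j : Fin N, Computable fun x : γ =>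
      sshift (P x) ((∑ k, smul (AM (I x) j k (P x)) ((Y x).get k)) + smul (Av (I x) j (P x)) (2 ^ (P x), 0)) := by
    intro j
    have hAMc : ∀ k : Fin N, Computable fun x : γ => AM (I x) j k (P x) := by
      intro k
      have hv : Computable fun x : γ => List.Vector.ofFn (fun i : Fin m => AM i j k (P x)) :=
        Computable.vector_ofFn fun i => (hAM i j k).comp hP
      exact (Computable.vector_get.comp hv hI).of_eq fun x => by
        simp [List.Vector.get_ofFn]
    have hAvc : Computable fun x : γ => Av (I x) j (P x) := by
      have hv : Computable fun x : γ => List.Vector.ofFn (fun i : Fin m => Av i j (P x)) :=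
        Computable.vector_ofFn fun i => (hAv i j).comp hP
      exact (Computable.vector_get.comp hv hI).of_eq fun x => by
        simp [List.Vector.get_ofFn]
    have hsum : Computable fun x : γ => ∑ k, smul (AM (I x) j k (P x)) ((Y x).get k) :=
      computable_fin_sum_pair (fun k x => smul (AM (I x) j k (P x)) ((Y x).get k)) fun k =>
        primrec_smul.to_comp.comp (hAMc k) (Computable.vector_get.comp hY (Computable.const k))
    have hv1 : Computable fun x : γ => smul (Av (I x) j (P x)) (2 ^ (P x), 0) :=
      primrec_smul.to_comp.comp hAvc ((primrec_pow2.to_comp.comp hP).pair (Computable.const 0))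
    exact primrec_sshift.to_comp.comp hP (primrec_padd.to_comp.comp hsum hv1)
  exact (Computable.vector_ofFn hcoord).of_eq fun x => rfl

lemma computable_runA (hAM : ∀ i j k, Computable (AM i j k)) (hAv : ∀ i j, Computable (Av i j))
    (hfo : Computable fo)
    {P W D : γ → ℕ} (hP : Computable P) (hW : Computable W) (hD : Computable D) :
    Computable fun x => runA AM Av fo (P x) (W x) (D x) := by
  have hstep : Computable₂ fun (x : γ) (q : ℕ × List.Vector (ℕ × ℕ) N) =>
      stepA AM Av (P (x)) (fo (W x / m ^ q.1 % m)) q.2 := by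
    apply computable_stepA AM Av hAM hAv (hP.comp Computable.fst)
    · refine hfo.comp (Primrec.nat_mod.to_comp.comp ?_ (Computable.const m))
      refine Primrec.nat_div.to_comp.comp (hW.comp Computable.fst) ?_
      exact (Primrec₂.unpaired'.1 Nat.Primrec.pow).to_comp.comp (Computable.const m)
        (Computable.fst.comp Computable.snd)
    · exact Computable.snd.comp Computable.snd
  have := Computable.nat_rec hD
    (Computable.const (List.Vector.ofFn fun _ : Fin N => ((0, 0) : ℕ × ℕ))) hstep
  refine this.of_eq fun x => ?_
  generalize D x = t
  induction t with
  | zero => rfl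
  | succ t ih => exact congrArg (stepA AM Av (P x) (fo (W x / m ^ t % m))) ih

lemma computable_testT {P n A B V : γ → ℕ} (hP : Computable P) (hn : Computable n)
    (hA : Computable A) (hB : Computable B) (hV : Computable V) :
    Computable fun x => testT (P x) (n x) (A x) (B x) (V x) := by
  have c1 : Computable fun x => 2 ^ (P x - n x - 1) :=
    primrec_pow2.to_comp.comp (Primrec.nat_sub.to_comp.comp
      (Primrec.nat_sub.to_comp.comp hP hn) (Computable.const 1))
  have c2 : Computable fun x => 2 ^ P x - 1 :=
    Primrec.nat_sub.to_comp.comp (primrec_pow2.to_comp.comp hP) (Computable.const 1)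
  have c3 : Computable fun x => V x * 2 ^ (P x - n x) :=
    Primrec.nat_mul.to_comp.comp hV
      (primrec_pow2.to_comp.comp (Primrec.nat_sub.to_comp.comp hP hn))
  exact Primrec.nat_add.to_comp.comp (Primrec.nat_add.to_comp.comp hA c1)
    (Primrec.nat_mul.to_comp.comp c2 (Primrec.nat_add.to_comp.comp hB c3))

lemma computable_checkA (hN : 0 < N) (hAM : ∀ i j k, Computable (AM i j k))
    (hAv : ∀ i j, Computable (Av i j)) (hfo : Computable fo) (K aa bb : ℕ) :
    Computable₂ (checkA AM Av fo hN K aa bb) := by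
  have cs : ∀ i : Fin N, Computable fun a : (Fin N → BStr) × ℕ => a.1 i := fun i =>
    Computable.fin_app.comp Computable.fst (Computable.const i)
  have cn : Computable fun a : (Fin N → BStr) × ℕ => (a.1 ⟨0, hN⟩).length :=
    Computable.list_length.comp (cs ⟨0, hN⟩)
  have cd : Computable fun a : (Fin N → BStr) × ℕ => a.2.unpair.1 :=
    Computable.fst.comp (Computable.unpair.comp Computable.snd)
  have cw : Computable fun a : (Fin N → BStr) × ℕ => a.2.unpair.2 :=
    Computable.snd.comp (Computable.unpair.comp Computable.snd)
  have cp : Computable fun a : (Fin N → BStr) × ℕ =>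
      pOf K (a.1 ⟨0, hN⟩).length a.2.unpair.1 := by
    have : Computable fun a : (Fin N → BStr) × ℕ => K * (a.2.unpair.1 + 1) :=
      Primrec.nat_mul.to_comp.comp (Computable.const K)
        (Primrec.nat_add.to_comp.comp cd (Computable.const 1))
    exact Primrec.nat_add.to_comp.comp (Primrec.nat_add.to_comp.comp this cn)
      (Computable.const 3)
  have crun : Computable fun a : (Fin N → BStr) × ℕ =>
      runA AM Av fo (pOf K (a.1 ⟨0, hN⟩).length a.2.unpair.1) a.2.unpair.2 a.2.unpair.1 :=
    computable_runA AM Av fo hAM hAv hfo cp cw cd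
  have conj1 : Computable fun a : (Fin N → BStr) × ℕ =>
      finAll fun i : Fin N => decide ((a.1 i).length = (a.1 ⟨0, hN⟩).length) :=
    computable_finAll _ fun i =>
      Primrec.eq.decide.to_comp.comp (Computable.list_length.comp (cs i)) cn
  have conj2 : Computable fun a : (Fin N → BStr) × ℕ =>
      decide (bb * ((a.1 ⟨0, hN⟩).length + 2 + aa) ≤ a.2.unpair.1) :=
    Primrec.nat_le.decide.to_comp.comp
      (Primrec.nat_mul.to_comp.comp (Computable.const bb)
        (Primrec.nat_add.to_comp.comp
          (Primrec.nat_add.to_comp.comp cn (Computable.const 2)) (Computable.const aa)))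
      cd
  have conj3 : Computable fun a : (Fin N → BStr) × ℕ =>
      finAll fun i : Fin N =>
        decide (testT (pOf K (a.1 ⟨0, hN⟩).length a.2.unpair.1) (a.1 ⟨0, hN⟩).length
            ((runA AM Av fo (pOf K (a.1 ⟨0, hN⟩).length a.2.unpair.1) a.2.unpair.2
              a.2.unpair.1).get i).1
            ((runA AM Av fo (pOf K (a.1 ⟨0, hN⟩).length a.2.unpair.1) a.2.unpair.2
              a.2.unpair.1).get i).2
            (valnum (a.1 i)) % 2 ^ (pOf K (a.1 ⟨0, hN⟩).length a.2.unpair.1)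
          < 2 ^ (pOf K (a.1 ⟨0, hN⟩).length a.2.unpair.1 - (a.1 ⟨0, hN⟩).length + 1)) := by
    apply computable_finAll
    intro i
    have geti := Computable.vector_get.comp crun (Computable.const i)
    have ctest := computable_testT cp cn (Computable.fst.comp geti) (Computable.snd.comp geti)
      (primrec_valnum.to_comp.comp (cs i))
    have cmod : Computable fun a : (Fin N → BStr) × ℕ => _ % 2 ^ pOf K (a.1 ⟨0, hN⟩).length a.2.unpair.1 :=
      Primrec.nat_mod.to_comp.comp ctest (primrec_pow2.to_comp.comp cp)
    have crhs : Computable fun a : (Fin N → BStr) × ℕ =>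
        2 ^ (pOf K (a.1 ⟨0, hN⟩).length a.2.unpair.1 - (a.1 ⟨0, hN⟩).length + 1) :=
      primrec_pow2.to_comp.comp
        (Primrec.nat_add.to_comp.comp (Primrec.nat_sub.to_comp.comp cp cn)
          (Computable.const 1))
    exact Primrec.nat_lt.decide.to_comp.comp cmod crhs
  exact ((Primrec.dom_bool₂ (· && ·)).to_comp.comp conj1
    ((Primrec.dom_bool₂ (· && ·)).to_comp.comp conj2 conj3)).of_eq fun a => rfl

end Machine

section Analysis

variable {N m : ℕ}

lemma abs_coord_le_dist (x y : EuclideanSpace ℝ (Fin N)) (j : Fin N) :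
    |x j - y j| ≤ dist x y := by
  rw [EuclideanSpace.dist_eq]
  calc |x j - y j| = dist (x j) (y j) := (Real.dist_eq _ _).symm
    _ = Real.sqrt (dist (x j) (y j) ^ 2) := by rw [Real.sqrt_sq dist_nonneg]
    _ ≤ Real.sqrt (∑ i, dist (x i) (y i) ^ 2) :=
        Real.sqrt_le_sqrt (Finset.single_le_sum (f := fun i => dist (x i) (y i) ^ 2)
          (fun i _ => sq_nonneg _) (Finset.mem_univ j))

def zIter (S : Fin m → EuclideanSpace ℝ (Fin N) → EuclideanSpace ℝ (Fin N))
    (σ : ℕ → Fin m) : ℕ → EuclideanSpace ℝ (Fin N)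
  | 0 => 0
  | t + 1 => S (σ t) (zIter S σ t)

lemma zIter_congr (S : Fin m → EuclideanSpace ℝ (Fin N) → EuclideanSpace ℝ (Fin N))
    {σ σ' : ℕ → Fin m} : ∀ {t}, (∀ u, u < t → σ u = σ' u) → zIter S σ t = zIter S σ' t := by
  intro t
  induction t with
  | zero => intro _; rfl
  | succ t ih =>
    intro h
    rw [zIter, zIter, h t (by omega), ih fun u hu => h u (by omega)]

variable {S : Fin m → EuclideanSpace ℝ (Fin N) → EuclideanSpace ℝ (Fin N)}
  {F : Set (EuclideanSpace ℝ (Fin N))} {c : Fin m → ℝ} {cm : ℝ}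

lemma zIter_close (hSF : ∀ i, S i '' F ⊆ F)
    (hContr : ∀ i x y, dist (S i x) (S i y) ≤ c i * dist x y)
    (hci : ∀ i, c i ≤ cm) (hcm0 : 0 ≤ cm)
    (x₀ : EuclideanSpace ℝ (Fin N)) (hx₀ : x₀ ∈ F) (σ : ℕ → Fin m) :
    ∀ t, ∃ y ∈ F, dist (zIter S σ t) y ≤ cm ^ t * ‖x₀‖ := by
  intro t
  induction t with
  | zero => exact ⟨x₀, hx₀, by rw [zIter, dist_zero_left, pow_zero, one_mul]⟩
  | succ t ih =>
    obtain ⟨y, hy, hd⟩ := ih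
    refine ⟨S (σ t) y, hSF _ ⟨y, hy, rfl⟩, ?_⟩
    calc dist (zIter S σ (t + 1)) (S (σ t) y) = dist (S (σ t) (zIter S σ t)) (S (σ t) y) := rfl
      _ ≤ c (σ t) * dist (zIter S σ t) y := hContr _ _ _
      _ ≤ cm * (cm ^ t * ‖x₀‖) := by
          apply mul_le_mul (hci _) hd dist_nonneg hcm0
      _ = cm ^ (t + 1) * ‖x₀‖ := by rw [pow_succ]; ring

lemma zIter_reach (hFinv : F = ⋃ i, S i '' F)
    (hContr : ∀ i x y, dist (S i x) (S i y) ≤ c i * dist x y)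
    (hci : ∀ i, c i ≤ cm) (hcm0 : 0 ≤ cm) (i0 : Fin m)
    (R : ℝ) (hR : ∀ y ∈ F, ‖y‖ ≤ R) :
    ∀ d, ∀ x ∈ F, ∃ σ : ℕ → Fin m, dist x (zIter S σ d) ≤ cm ^ d * R := by
  intro d
  induction d with
  | zero =>
    intro x hx
    refine ⟨fun _ => i0, ?_⟩
    rw [pow_zero, one_mul]
    have : zIter S (fun _ => i0) 0 = 0 := rfl
    rw [this, dist_zero_right]
    exact hR x hx
  | succ d ih =>
    intro x hx
    rw [hFinv] at hx
    obtain ⟨i, x', hx', rfl⟩ := by simpa using hx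
    obtain ⟨σ', hσ'⟩ := ih x' hx'
    refine ⟨fun u => if u = d then i else σ' u, ?_⟩
    have he : zIter S (fun u => if u = d then i else σ' u) d = zIter S σ' d :=
      zIter_congr S fun u hu => if_neg (by omega)
    have hlast : zIter S (fun u => if u = d then i else σ' u) (d + 1)
        = S i (zIter S σ' d) := by
      rw [zIter, he, if_pos rfl]
    rw [hlast]
    calc dist (S i x') (S i (zIter S σ' d)) ≤ c i * dist x' (zIter S σ' d) := hContr _ _ _
      _ ≤ cm * (cm ^ d * R) := by
          apply mul_le_mul (hci _) hσ' dist_nonneg hcm0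
      _ = cm ^ (d + 1) * R := by rw [pow_succ]; ring

lemma runA_error
    (M : Fin m → Fin N → Fin N → ℝ) (v : Fin m → Fin N → ℝ)
    (AM : Fin m → Fin N → Fin N → ℕ → ℕ × ℕ) (Av : Fin m → Fin N → ℕ → ℕ × ℕ)
    (fo : ℕ → Fin m) (Bc G : ℕ)
    (hAM : ∀ i j k p, |M i j k - sval p (AM i j k p)| ≤ 1 / 2 ^ p)
    (hAv : ∀ i j p, |v i j - sval p (Av i j p)| ≤ 1 / 2 ^ p)
    (hMB : ∀ i j k, |M i j k| ≤ Bc)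
    (hAffine : ∀ i x j, S i x j = (∑ k, M i j k * x k) + v i j)
    (σ : ℕ → Fin m) (p w : ℕ) (hσ : ∀ t, σ t = fo (w / m ^ t % m))
    (hzG : ∀ t j, |zIter S σ t j| ≤ G) :
    ∀ t j, |sval p ((runA AM Av fo p w t).get j) - zIter S σ t j|
      ≤ ((N * (Bc + 1) + N * G + 4 : ℕ) : ℝ) ^ (t + 1) / 2 ^ p := by
  have h2p : (0:ℝ) < 2 ^ p := by positivity
  set Q : ℝ := ((N * (Bc + 1) + N * G + 4 : ℕ) : ℝ) with hQ
  have hQ1 : 1 ≤ Q := by rw [hQ]; exact_mod_cast (by omega : 1 ≤ N * (Bc + 1) + N * G + 4)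
  have hQ0 : 0 ≤ Q := by linarith
  intro t
  induction t with
  | zero =>
    intro j
    have h1 : (runA AM Av fo p w 0).get j = (0, 0) := by
      rw [runA]; exact List.Vector.get_ofFn _ j
    have h2 : zIter S σ 0 j = 0 := rfl
    rw [h1, h2, sval]
    simp only [Nat.cast_zero, sub_zero, sub_self, zero_div, abs_zero]
    positivity
  | succ t ih =>
    intro j
    have hi : fo (w / m ^ t % m) = σ t := (hσ t).symm
    -- the new coordinate value
    have hget : (runA AM Av fo p w (t + 1)).get j
        = sshift p ((∑ k, smul (AM (σ t) j k p) ((runA AM Av fo p w t).get k))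
            + smul (Av (σ t) j p) (2 ^ p, 0)) := by
      rw [runA, stepA, hi]
      exact List.Vector.get_ofFn _ j
    set yv : Fin N → ℕ × ℕ := fun k => (runA AM Av fo p w t).get k with hyv
    set zc : Fin N → ℝ := fun k => zIter S σ t k with hzc
    have hinner : sval (p + p) ((∑ k, smul (AM (σ t) j k p) (yv k))
        + smul (Av (σ t) j p) (2 ^ p, 0))
        = (∑ k, sval p (AM (σ t) j k p) * sval p (yv k)) + sval p (Av (σ t) j p) := by
      rw [sval_add, sval_sum]
      congr 1
      · exact Finset.sum_congr rfl fun k _ => sval_smul p p _ _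
      · rw [sval_smul p p, sval_one, mul_one]
    have hz1 : zIter S σ (t + 1) j = (∑ k, M (σ t) j k * zc k) + v (σ t) j := by
      rw [zIter, hAffine]
    have hshift : |sval p ((runA AM Av fo p w (t + 1)).get j)
        - sval (p + p) ((∑ k, smul (AM (σ t) j k p) (yv k)) + smul (Av (σ t) j p) (2 ^ p, 0))|
        ≤ 2 / 2 ^ p := by
      rw [hget]
      exact sval_sshift p _
    -- term-wise bound
    have hterm : ∀ k, |sval p (AM (σ t) j k p) * sval p (yv k) - M (σ t) j k * zc k|
        ≤ (Bc + 1) * (Q ^ (t + 1) / 2 ^ p) + G / 2 ^ p := by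
      intro k
      have hAMk := hAM (σ t) j k p
      have hMk := hMB (σ t) j k
      have hyk := ih k
      have hzk := hzG t k
      have hMhat : |sval p (AM (σ t) j k p)| ≤ Bc + 1 := by
        have h1 : (1:ℝ) / 2 ^ p ≤ 1 := by
          rw [div_le_one h2p]
          exact one_le_pow₀ (by norm_num)
        have h2 : sval p (AM (σ t) j k p)
            = M (σ t) j k - (M (σ t) j k - sval p (AM (σ t) j k p)) := by ring
        rw [h2]
        refine (abs_sub _ _).trans ?_
        linarith
      calc |sval p (AM (σ t) j k p) * sval p (yv k) - M (σ t) j k * zc k|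
          = |sval p (AM (σ t) j k p) * (sval p (yv k) - zc k)
            + (sval p (AM (σ t) j k p) - M (σ t) j k) * zc k| := congrArg abs (by ring)
        _ ≤ |sval p (AM (σ t) j k p) * (sval p (yv k) - zc k)|
            + |(sval p (AM (σ t) j k p) - M (σ t) j k) * zc k| := abs_add_le _ _
        _ ≤ (Bc + 1) * (Q ^ (t + 1) / 2 ^ p) + (1 / 2 ^ p) * G := by
            rw [abs_mul, abs_mul]
            apply add_le_add
            · exact mul_le_mul hMhat hyk (abs_nonneg _) (by positivity)
            · exact mul_le_mul (by rw [abs_sub_comm]; exact hAMk) hzk (abs_nonneg _) (by positivity)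
        _ = (Bc + 1) * (Q ^ (t + 1) / 2 ^ p) + G / 2 ^ p := by ring
    -- sum bound
    have hsumb : |(∑ k, sval p (AM (σ t) j k p) * sval p (yv k)) - ∑ k, M (σ t) j k * zc k|
        ≤ N * ((Bc + 1) * (Q ^ (t + 1) / 2 ^ p) + G / 2 ^ p) := by
      rw [← Finset.sum_sub_distrib]
      calc |∑ k, (sval p (AM (σ t) j k p) * sval p (yv k) - M (σ t) j k * zc k)|
          ≤ ∑ k, |sval p (AM (σ t) j k p) * sval p (yv k) - M (σ t) j k * zc k| :=
            Finset.abs_sum_le_sum_abs _ _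
        _ ≤ ∑ _k : Fin N, ((Bc + 1) * (Q ^ (t + 1) / 2 ^ p) + G / 2 ^ p) :=
            Finset.sum_le_sum fun k _ => hterm k
        _ = N * ((Bc + 1) * (Q ^ (t + 1) / 2 ^ p) + G / 2 ^ p) := by
            rw [Finset.sum_const, Finset.card_univ, Fintype.card_fin, nsmul_eq_mul]
    have hvb := hAv (σ t) j p
    -- assemble
    have hQpow1 : (1:ℝ) ≤ Q ^ (t + 1) := one_le_pow₀ hQ1
    have htotal : |sval p ((runA AM Av fo p w (t + 1)).get j) - zIter S σ (t + 1) j|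
        ≤ 2 / 2 ^ p + (N * ((Bc + 1) * (Q ^ (t + 1) / 2 ^ p) + G / 2 ^ p) + 1 / 2 ^ p) := by
      rw [hz1]
      have e1 := hshift
      have e2 : |sval (p + p) ((∑ k, smul (AM (σ t) j k p) (yv k)) + smul (Av (σ t) j p) (2 ^ p, 0))
          - ((∑ k, M (σ t) j k * zc k) + v (σ t) j)|
          ≤ N * ((Bc + 1) * (Q ^ (t + 1) / 2 ^ p) + G / 2 ^ p) + 1 / 2 ^ p := by
        rw [hinner]
        calc |(∑ k, sval p (AM (σ t) j k p) * sval p (yv k)) + sval p (Av (σ t) j p)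
            - ((∑ k, M (σ t) j k * zc k) + v (σ t) j)|
            = |((∑ k, sval p (AM (σ t) j k p) * sval p (yv k)) - ∑ k, M (σ t) j k * zc k)
              + (sval p (Av (σ t) j p) - v (σ t) j)| := congrArg abs (by ring)
          _ ≤ |(∑ k, sval p (AM (σ t) j k p) * sval p (yv k)) - ∑ k, M (σ t) j k * zc k|
              + |sval p (Av (σ t) j p) - v (σ t) j| := abs_add_le _ _
          _ ≤ N * ((Bc + 1) * (Q ^ (t + 1) / 2 ^ p) + G / 2 ^ p) + 1 / 2 ^ p := by
              apply add_le_add hsumb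
              rw [abs_sub_comm]
              exact hvb
      calc |sval p ((runA AM Av fo p w (t + 1)).get j) - ((∑ k, M (σ t) j k * zc k) + v (σ t) j)|
          ≤ |sval p ((runA AM Av fo p w (t + 1)).get j)
              - sval (p + p) ((∑ k, smul (AM (σ t) j k p) (yv k)) + smul (Av (σ t) j p) (2 ^ p, 0))|
            + |sval (p + p) ((∑ k, smul (AM (σ t) j k p) (yv k)) + smul (Av (σ t) j p) (2 ^ p, 0))
              - ((∑ k, M (σ t) j k * zc k) + v (σ t) j)| := abs_sub_le _ _ _
        _ ≤ 2 / 2 ^ p + (N * ((Bc + 1) * (Q ^ (t + 1) / 2 ^ p) + G / 2 ^ p) + 1 / 2 ^ p) :=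
            add_le_add e1 e2
    refine htotal.trans ?_
    have expand : Q ^ (t + 1 + 1) = Q ^ (t + 1) * Q := by rw [pow_succ]
    have hQsplit : Q = N * (Bc + 1) + (N * G + 4) := by rw [hQ]; push_cast; ring
    have hNG : (0:ℝ) ≤ (N:ℝ) * G := by positivity
    have hNB : (0:ℝ) ≤ (N:ℝ) * (Bc + 1) := by positivity
    have hnum : 2 + ((N:ℝ) * ((Bc + 1) * Q ^ (t + 1) + G) + 1) ≤ Q ^ (t + 1) * Q := by
      have hmul : ((N:ℝ) * G + 4) * 1 ≤ ((N:ℝ) * G + 4) * Q ^ (t + 1) :=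
        mul_le_mul_of_nonneg_left hQpow1 (by linarith)
      have hmul2 : (N:ℝ) * (Bc + 1) * Q ^ (t + 1) ≥ 0 := by positivity
      nlinarith [hmul, hmul2]
    calc 2 / 2 ^ p + ((N:ℝ) * ((Bc + 1) * (Q ^ (t + 1) / 2 ^ p) + G / 2 ^ p) + 1 / 2 ^ p)
        = (2 + ((N:ℝ) * ((Bc + 1) * Q ^ (t + 1) + G) + 1)) / 2 ^ p := by ring
      _ ≤ (Q ^ (t + 1) * Q) / 2 ^ p := by gcongr
      _ = Q ^ (t + 1 + 1) / 2 ^ p := by rw [expand]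

end Analysis



lemma half_pow_succ (n : ℕ) : (1:ℝ) / 2 ^ (n + 1) = (1 / 2 ^ n) / 2 := by
  rw [pow_succ]; ring

lemma geom_sound (n : ℕ) (ξ xv a : ℝ)
    (hfr : Int.fract ((ξ - a) + 1 / 2 ^ (n + 1)) < 2 / 2 ^ n)
    (hclose : |xv - ξ| ≤ 1 / 2 ^ (n + 1)) :
    ∃ z : ℤ, a - 1 / 2 ^ n ≤ xv - z ∧ xv - z < a + 2 / 2 ^ n := by
  have h0 : (0:ℝ) ≤ ((ξ - a) + 1 / 2 ^ (n + 1)) - ⌊(ξ - a) + 1 / 2 ^ (n + 1)⌋ := by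
    linarith [Int.floor_le ((ξ - a) + 1 / 2 ^ (n + 1))]
  have h1 : ((ξ - a) + 1 / 2 ^ (n + 1)) - ⌊(ξ - a) + 1 / 2 ^ (n + 1)⌋ < 2 / 2 ^ n := by
    have he : Int.fract ((ξ - a) + 1 / 2 ^ (n + 1))
        = ((ξ - a) + 1 / 2 ^ (n + 1)) - ⌊(ξ - a) + 1 / 2 ^ (n + 1)⌋ := rfl
    linarith [he ▸ hfr]
  have hh := half_pow_succ n
  have h2 : (2:ℝ) / 2 ^ n = 2 * (1 / 2 ^ n) := by ring
  have hc := abs_le.1 hclose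
  exact ⟨⌊(ξ - a) + 1 / 2 ^ (n + 1)⌋, by linarith [hc.1, hc.2], by linarith [hc.1, hc.2]⟩

lemma geom_complete (n : ℕ) (ξ xv a : ℝ) (z : ℤ)
    (h1 : a ≤ xv - z) (h2 : xv - z < a + 1 / 2 ^ n)
    (hclose : |xv - ξ| < 1 / 2 ^ (n + 1)) :
    Int.fract ((ξ - a) + 1 / 2 ^ (n + 1)) < 2 / 2 ^ n := by
  rcases Nat.eq_zero_or_pos n with hn | hn
  · subst hn
    norm_num
    linarith [Int.fract_lt_one ((ξ - a) + 1 / 2 ^ (0 + 1))]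
  · have hh := half_pow_succ n
    have hc := abs_lt.1 hclose
    have hz0 : 0 ≤ ((ξ - a) + 1 / 2 ^ (n + 1)) - z := by linarith [hc.1, hc.2]
    have hz2 : ((ξ - a) + 1 / 2 ^ (n + 1)) - z < 2 / 2 ^ n := by
      have : (2:ℝ) / 2 ^ n = 2 * (1 / 2 ^ n) := by ring
      linarith [hc.1, hc.2]
    have hlt1 : ((ξ - a) + 1 / 2 ^ (n + 1)) - z < 1 := by
      have h2n : (2:ℝ) ≤ 2 ^ n := by
        calc (2:ℝ) = 2 ^ 1 := (pow_one 2).symm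
        _ ≤ 2 ^ n := pow_le_pow_right₀ (by norm_num) hn
      have hp : (0:ℝ) < 2 ^ n := by positivity
      have : (2:ℝ) / 2 ^ n ≤ 1 := by rw [div_le_one hp]; exact h2n
      linarith
    have heq : Int.fract ((ξ - a) + 1 / 2 ^ (n + 1))
        = ((ξ - a) + 1 / 2 ^ (n + 1)) - z := by
      rw [← Int.fract_sub_intCast ((ξ - a) + 1 / 2 ^ (n + 1)) z,
        Int.fract_eq_self.2 ⟨hz0, hlt1⟩]
    rw [heq]
    exact hz2


end REaux

/-- The invariant set of finitely many affine contractions on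
`ℝ^N` with computable coefficients satisfies the r.e. condition. -/
theorem recond_of_computable_contractions
    (N : ℕ) (hN : 0 < N) (m : ℕ) (hm : 0 < m)
    (M : Fin m → Fin N → Fin N → ℝ) (v : Fin m → Fin N → ℝ) (c : Fin m → ℝ)
    (hc : ∀ i, c i ∈ Set.Ioo (0 : ℝ) 1)
    (S : Fin m → EuclideanSpace ℝ (Fin N) → EuclideanSpace ℝ (Fin N))
    (hAffine : ∀ i x j, S i x j = (∑ k, M i j k * x k) + v i j)
    (hContr : ∀ i x y, dist (S i x) (S i y) ≤ c i * dist x y)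
    (hMc : ∀ i j k, ComputableReal (M i j k)) (hvc : ∀ i j, ComputableReal (v i j))
    (F : Set (EuclideanSpace ℝ (Fin N))) (hFne : F.Nonempty) (hFc : IsCompact F)
    (hFinv : F = ⋃ i, S i '' F) :
    REcond N F := by
  classical
  -- rational (dyadic) approximations of all coefficients
  choose zpM znM gM hgMc hgM using fun i j k => REaux.exists_nat_approx _ (hMc i j k)
  choose zpv znv gv hgvc hgv using fun i j => REaux.exists_nat_approx _ (hvc i j)
  have hsvalA : ∀ (zp zn : ℕ) (g : ℕ → ℕ) (p : ℕ),
      REaux.sval p (zp * 2 ^ p + g p, zn * 2 ^ p) = (((zp : ℝ) - zn) + g p / 2 ^ p) := by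
    intro zp zn g p
    have h2 : (2:ℝ) ^ p ≠ 0 := by positivity
    rw [REaux.sval]
    push_cast
    field_simp
    ring
  set AM : Fin m → Fin N → Fin N → ℕ → ℕ × ℕ :=
    fun i j k p => (zpM i j k * 2 ^ p + gM i j k p, znM i j k * 2 ^ p) with hAMdef
  set Av : Fin m → Fin N → ℕ → ℕ × ℕ :=
    fun i j p => (zpv i j * 2 ^ p + gv i j p, znv i j * 2 ^ p) with hAvdef
  have hAMapprox : ∀ i j k p, |M i j k - REaux.sval p (AM i j k p)| ≤ 1 / 2 ^ p := by
    intro i j k p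
    rw [hAMdef]
    dsimp only
    rw [hsvalA]
    exact hgM i j k p
  have hAvapprox : ∀ i j p, |v i j - REaux.sval p (Av i j p)| ≤ 1 / 2 ^ p := by
    intro i j p
    rw [hAvdef]
    dsimp only
    rw [hsvalA]
    exact hgv i j p
  have hAMc : ∀ i j k, Computable (AM i j k) := by
    intro i j k
    rw [hAMdef]
    exact ((Primrec.nat_add.to_comp.comp
      (Primrec.nat_mul.to_comp.comp (Computable.const (zpM i j k)) REaux.primrec_pow2.to_comp)
      (hgMc i j k)).pair
      (Primrec.nat_mul.to_comp.comp (Computable.const (znM i j k)) REaux.primrec_pow2.to_comp))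
  have hAvc : ∀ i j, Computable (Av i j) := by
    intro i j
    rw [hAvdef]
    exact ((Primrec.nat_add.to_comp.comp
      (Primrec.nat_mul.to_comp.comp (Computable.const (zpv i j)) REaux.primrec_pow2.to_comp)
      (hgvc i j)).pair
      (Primrec.nat_mul.to_comp.comp (Computable.const (znv i j)) REaux.primrec_pow2.to_comp))
  -- symbol decoder
  set fo : ℕ → Fin m := fun e => ⟨e % m, Nat.mod_lt e hm⟩ with hfodef
  have hfo : Computable fo := by
    have h1 : Primrec fun e : ℕ => (fo e).val := by
      rw [hfodef]
      exact Primrec.nat_mod.comp Primrec.id (Primrec.const m)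
    exact (Primrec.fin_val_iff.1 h1).to_comp
  -- geometric constants
  obtain ⟨r, hr0, hrF⟩ : ∃ r : ℝ, 0 ≤ r ∧ ∀ y ∈ F, ‖y‖ ≤ r := by
    obtain ⟨r, hr⟩ := hFc.isBounded.subset_closedBall 0
    exact ⟨max r 0, le_max_right _ _, fun y hy =>
      le_trans (mem_closedBall_zero_iff.1 (hr hy)) (le_max_left _ _)⟩
  haveI : Nonempty (Fin m) := ⟨⟨0, hm⟩⟩
  set cm : ℝ := Finset.univ.sup' Finset.univ_nonempty c with hcmdef
  have hci : ∀ i, c i ≤ cm := fun i => Finset.le_sup' c (Finset.mem_univ i)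
  have hcm0 : 0 ≤ cm := le_trans (hc ⟨0, hm⟩).1.le (hci _)
  have hcm1 : cm < 1 := (Finset.sup'_lt_iff Finset.univ_nonempty).2 fun i _ => (hc i).2
  obtain ⟨bb, hbb⟩ : ∃ bb : ℕ, cm ^ bb ≤ 1 / 2 := by
    obtain ⟨bb, h⟩ := exists_pow_lt_of_lt_one (by norm_num : (0:ℝ) < 1/2) hcm1
    exact ⟨bb, h.le⟩
  obtain ⟨aa, haa⟩ : ∃ aa : ℕ, r ≤ 2 ^ aa := by
    obtain ⟨n0, hn0⟩ := exists_nat_ge r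
    refine ⟨n0, hn0.trans ?_⟩
    exact_mod_cast (Nat.lt_two_pow_self (n := n0)).le
  obtain ⟨Bc, hMB, hvB⟩ : ∃ Bc : ℕ, (∀ i j k, |M i j k| ≤ (Bc:ℝ)) ∧
      (∀ i j, |v i j| ≤ (Bc:ℝ)) := by
    obtain ⟨B1, hB1⟩ := Finite.exists_le fun q : Fin m × Fin N × Fin N => |M q.1 q.2.1 q.2.2|
    obtain ⟨B2, hB2⟩ := Finite.exists_le fun q : Fin m × Fin N => |v q.1 q.2|
    obtain ⟨Bc, hBc⟩ := exists_nat_ge (max B1 B2)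
    exact ⟨Bc, fun i j k => le_trans (hB1 (i, j, k)) (le_trans (le_max_left _ _) hBc),
      fun i j => le_trans (hB2 (i, j)) (le_trans (le_max_right _ _) hBc)⟩
  obtain ⟨G, hG⟩ := exists_nat_ge (2 * r + 1)
  set K : ℕ := N * (Bc + 1) + N * G + 4 with hKdef
  have hK : K ≤ 2 ^ K := (Nat.lt_two_pow_self (n := K)).le
  -- invariance
  have hSF : ∀ i, S i '' F ⊆ F := by
    intro i y hy
    rw [hFinv]
    exact Set.mem_iUnion.2 ⟨i, hy⟩
  obtain ⟨x₀, hx₀⟩ := hFne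
  -- all the iterates stay in a ball of radius r around F, coordinates bounded by G
  have hclose_r : ∀ (σ : ℕ → Fin m) t, ∃ y ∈ F, dist (REaux.zIter S σ t) y ≤ cm ^ t * r := by
    intro σ t
    obtain ⟨y, hyF, hdy⟩ := REaux.zIter_close hSF hContr hci hcm0 x₀ hx₀ σ t
    exact ⟨y, hyF, hdy.trans (mul_le_mul le_rfl (hrF x₀ hx₀) (norm_nonneg _)
      (pow_nonneg hcm0 _))⟩
  have hzG : ∀ (σ : ℕ → Fin m) t j, |REaux.zIter S σ t j| ≤ (G:ℝ) := by
    intro σ t j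
    obtain ⟨y, hyF, hdy⟩ := hclose_r σ t
    have h1 : dist (REaux.zIter S σ t) y ≤ r := by
      refine hdy.trans ?_
      calc cm ^ t * r ≤ 1 * r :=
          mul_le_mul_of_nonneg_right (pow_le_one₀ hcm0 hcm1.le) hr0
        _ = r := one_mul r
    have h2 : |y j| ≤ r := by
      have h3 := REaux.abs_coord_le_dist y 0 j
      have h4 : (0 : EuclideanSpace ℝ (Fin N)) j = 0 := rfl
      rw [h4, sub_zero, dist_zero_right] at h3
      exact h3.trans (hrF y hyF)
    calc |REaux.zIter S σ t j|
        = |(REaux.zIter S σ t j - y j) + y j| := congrArg abs (by ring)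
      _ ≤ |REaux.zIter S σ t j - y j| + |y j| := abs_add_le _ _
      _ ≤ dist (REaux.zIter S σ t) y + r := add_le_add (REaux.abs_coord_le_dist _ _ j) h2
      _ ≤ r + r := add_le_add h1 le_rfl
      _ ≤ G := by linarith [hG]
  -- approximation error of the machine run
  have herr : ∀ (n d w : ℕ) (j : Fin N),
      |REaux.sval (REaux.pOf K n d) ((REaux.runA AM Av fo (REaux.pOf K n d) w d).get j)
        - REaux.zIter S (fun t => fo (w / m ^ t % m)) d j| ≤ 1 / 2 ^ (n + 3) := by
    intro n d w j
    have h := REaux.runA_error M v AM Av fo Bc G hAMapprox hAvapprox hMB hAffine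
      (fun t => fo (w / m ^ t % m)) (REaux.pOf K n d) w (fun t => rfl)
      (hzG _) d j
    refine h.trans ?_
    have hp2 : (2:ℝ) ^ (REaux.pOf K n d) = 2 ^ (K * (d + 1)) * 2 ^ (n + 3) := by
      rw [REaux.pOf, ← pow_add,
        show K * (d + 1) + n + 3 = K * (d + 1) + (n + 3) from by ring]
    have hQpow : ((N * (Bc + 1) + N * G + 4 : ℕ) : ℝ) ^ (d + 1) ≤ 2 ^ (K * (d + 1)) := by
      calc ((N * (Bc + 1) + N * G + 4 : ℕ) : ℝ) ^ (d + 1) ≤ ((2:ℝ) ^ K) ^ (d + 1) := by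
            apply pow_le_pow_left₀ (by positivity)
            · exact_mod_cast hK
        _ = 2 ^ (K * (d + 1)) := by rw [← pow_mul]
    rw [div_le_div_iff₀ (by positivity) (by positivity), one_mul, hp2]
    exact mul_le_mul_of_nonneg_right hQpow (by positivity)
  -- depth guarantees geometric closeness
  have hdclose : ∀ n d : ℕ, bb * (n + 2 + aa) ≤ d → cm ^ d * r ≤ 1 / 2 ^ (n + 2) := by
    intro n d hd
    have h1 : cm ^ d ≤ cm ^ (bb * (n + 2 + aa)) := pow_le_pow_of_le_one hcm0 hcm1.le hd
    have h2 : cm ^ (bb * (n + 2 + aa)) = (cm ^ bb) ^ (n + 2 + aa) := by rw [← pow_mul]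
    have h3 : (cm ^ bb) ^ (n + 2 + aa) ≤ ((1:ℝ) / 2) ^ (n + 2 + aa) :=
      pow_le_pow_left₀ (pow_nonneg hcm0 _) hbb _
    have h4 : ((1:ℝ) / 2) ^ (n + 2 + aa) * 2 ^ aa = 1 / 2 ^ (n + 2) := by
      have h5 : (2:ℝ) ^ (n + 2 + aa) = 2 ^ (n + 2) * 2 ^ aa := by rw [pow_add]
      rw [div_pow, one_pow, h5]
      have h6 : (2:ℝ) ^ (n+2) ≠ 0 := by positivity
      have h7 : (2:ℝ) ^ aa ≠ 0 := by positivity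
      field_simp
    have h23 : cm ^ (bb * (n + 2 + aa)) ≤ ((1:ℝ) / 2) ^ (n + 2 + aa) := by
      rw [h2]; exact h3
    refine le_trans ?_ (le_of_eq h4)
    exact mul_le_mul (h1.trans h23) haa hr0 (by positivity)
  have hsum3 : ∀ n : ℕ, 1 / 2 ^ (n + 2) + 1 / 2 ^ (n + 3) < (1:ℝ) / 2 ^ (n + 1) := by
    intro n
    have e1 : (1:ℝ) / 2 ^ (n + 2) = (1 / 2 ^ (n + 1)) / 2 := REaux.half_pow_succ (n + 1)
    have e2 : (1:ℝ) / 2 ^ (n + 3) = ((1 / 2 ^ (n + 1)) / 2) / 2 := by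
      rw [REaux.half_pow_succ (n + 2), REaux.half_pow_succ (n + 1)]
    have e3 : (0:ℝ) < 1 / 2 ^ (n + 1) := by positivity
    rw [e1, e2]
    linarith
  have hzpow : ∀ n : ℕ, (2:ℝ) ^ (-(n:ℤ)) = 1 / 2 ^ n := by
    intro n
    rw [zpow_neg, zpow_natCast, one_div]
  -- the r.e. set
  set L : Set (Fin N → BStr) :=
    {s | ∃ kk : ℕ, REaux.checkA AM Av fo hN K aa bb s kk = true} with hLdef
  refine ⟨L, ?_, ?_, ?_⟩
  · exact REaux.rePred_exists (REaux.computable_checkA AM Av fo hN hAMc hAvc hfo K aa bb)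
  -- MM ⊆ L
  · rintro s ⟨hlen, x, hxF, hxI⟩
    obtain ⟨σ, hσ⟩ := REaux.zIter_reach hFinv hContr hci hcm0 ⟨0, hm⟩ r hrF
      (bb * ((s ⟨0, hN⟩).length + 2 + aa)) x hxF
    refine ⟨Nat.pair (bb * ((s ⟨0, hN⟩).length + 2 + aa))
      (∑ t ∈ Finset.range (bb * ((s ⟨0, hN⟩).length + 2 + aa)), (σ t).val * m ^ t), ?_⟩
    set n := (s ⟨0, hN⟩).length with hndef
    set d := bb * (n + 2 + aa) with hddef
    set w := ∑ t ∈ Finset.range d, (σ t).val * m ^ t with hwdef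
    have hdig : ∀ t, t < d → fo (w / m ^ t % m) = σ t := by
      intro t ht
      have h1 : w / m ^ t % m = (σ t).val := by
        rw [hwdef]
        exact REaux.digits_lemma m hm t d (fun u => (σ u).val) (fun u => (σ u).isLt) ht
      rw [hfodef]
      apply Fin.ext
      simp only [h1]
      exact Nat.mod_eq_of_lt (σ t).isLt
    have hzcongr : REaux.zIter S (fun t => fo (w / m ^ t % m)) d = REaux.zIter S σ d :=
      REaux.zIter_congr S fun u hu => hdig u hu
    simp only [REaux.checkA, Nat.unpair_pair, Bool.and_eq_true, REaux.finAll_eq_true,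
      decide_eq_true_eq]
    refine ⟨fun i => hlen i ⟨0, hN⟩, le_refl _, fun i => ?_⟩
    have hleni : (s i).length = n := hlen i ⟨0, hN⟩
    have hpn : n + 3 ≤ REaux.pOf K n d := by rw [REaux.pOf]; omega
    simp only [REaux.testT]
    rw [REaux.modtest _ _ _ _ _ hpn]
    -- apply geometry
    have hxIi := hxI i
    rw [Ival, Set.mem_Ico] at hxIi
    have ha : strVal (s i) = ((REaux.valnum (s i) : ℝ)) / 2 ^ n := by
      rw [REaux.strVal_eq, hleni]
    have hpow : (2:ℝ) ^ (-((s i).length : ℤ)) = 1 / 2 ^ n := by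
      rw [hleni]
      exact hzpow n
    have hfr : Int.fract (x i) = x i - ⌊x i⌋ := rfl
    have h1 : (REaux.valnum (s i) : ℝ) / 2 ^ n ≤ x i - ⌊x i⌋ := by
      rw [← ha, ← hfr]; exact hxIi.1
    have h2 : x i - ⌊x i⌋ < (REaux.valnum (s i) : ℝ) / 2 ^ n + 1 / 2 ^ n := by
      rw [← ha, ← hpow, ← hfr]; exact hxIi.2
    -- closeness of machine value to x i
    have hclose : |x i - REaux.sval (REaux.pOf K n d)
        ((REaux.runA AM Av fo (REaux.pOf K n d) w d).get i)| < 1 / 2 ^ (n + 1) := by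
      have e1 := herr n d w i
      rw [hzcongr] at e1
      have e2 : |x i - REaux.zIter S σ d i| ≤ 1 / 2 ^ (n + 2) := by
        refine le_trans (REaux.abs_coord_le_dist x (REaux.zIter S σ d) i) ?_
        exact hσ.trans (hdclose n d (le_of_eq hddef.symm))
      calc |x i - REaux.sval (REaux.pOf K n d)
            ((REaux.runA AM Av fo (REaux.pOf K n d) w d).get i)|
          = |(x i - REaux.zIter S σ d i)
            - (REaux.sval (REaux.pOf K n d)
              ((REaux.runA AM Av fo (REaux.pOf K n d) w d).get i) - REaux.zIter S σ d i)| :=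
            congrArg abs (by ring)
        _ ≤ |x i - REaux.zIter S σ d i|
            + |REaux.sval (REaux.pOf K n d)
              ((REaux.runA AM Av fo (REaux.pOf K n d) w d).get i) - REaux.zIter S σ d i| :=
            abs_sub _ _
        _ ≤ 1 / 2 ^ (n + 2) + 1 / 2 ^ (n + 3) := add_le_add e2 e1
        _ < 1 / 2 ^ (n + 1) := hsum3 n
    exact REaux.geom_complete n _ (x i) _ ⌊x i⌋ h1 h2 hclose
  -- L ⊆ MMhat
  · rintro s ⟨kk, hchk⟩
    simp only [REaux.checkA, Bool.and_eq_true, REaux.finAll_eq_true, decide_eq_true_eq] at hchk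
    obtain ⟨hlen, hd, htest⟩ := hchk
    set n := (s ⟨0, hN⟩).length with hndef
    set d := kk.unpair.1 with hddef
    set w := kk.unpair.2 with hwdef
    obtain ⟨xF, hxFF, hxFd⟩ := hclose_r (fun t => fo (w / m ^ t % m)) d
    have hxFclose : dist (REaux.zIter S (fun t => fo (w / m ^ t % m)) d) xF
        ≤ 1 / 2 ^ (n + 2) := hxFd.trans (hdclose n d hd)
    refine ⟨fun i j => by rw [hlen i, hlen j], xF, hxFF, fun i => ?_⟩
    have hleni : (s i).length = n := hlen i
    have hpn : n + 3 ≤ REaux.pOf K n d := by rw [REaux.pOf]; omega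
    have hm1 := (REaux.modtest (REaux.pOf K n d) n
      ((REaux.runA AM Av fo (REaux.pOf K n d) w d).get i).1
      ((REaux.runA AM Av fo (REaux.pOf K n d) w d).get i).2
      (REaux.valnum (s i)) hpn).1 (by simpa only [REaux.testT] using htest i)
    have hclose : |xF i - REaux.sval (REaux.pOf K n d)
        ((REaux.runA AM Av fo (REaux.pOf K n d) w d).get i)| ≤ 1 / 2 ^ (n + 1) := by
      have e1 := herr n d w i
      have e2 : |xF i - REaux.zIter S (fun t => fo (w / m ^ t % m)) d i| ≤ 1 / 2 ^ (n + 2) := by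
        refine le_trans ?_ hxFclose
        have := REaux.abs_coord_le_dist (REaux.zIter S (fun t => fo (w / m ^ t % m)) d) xF i
        rw [abs_sub_comm] at this
        exact this
      calc |xF i - REaux.sval (REaux.pOf K n d)
            ((REaux.runA AM Av fo (REaux.pOf K n d) w d).get i)|
          = |(xF i - REaux.zIter S (fun t => fo (w / m ^ t % m)) d i)
            - (REaux.sval (REaux.pOf K n d)
              ((REaux.runA AM Av fo (REaux.pOf K n d) w d).get i)
              - REaux.zIter S (fun t => fo (w / m ^ t % m)) d i)| := congrArg abs (by ring)
        _ ≤ |xF i - REaux.zIter S (fun t => fo (w / m ^ t % m)) d i|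
            + |REaux.sval (REaux.pOf K n d)
              ((REaux.runA AM Av fo (REaux.pOf K n d) w d).get i)
              - REaux.zIter S (fun t => fo (w / m ^ t % m)) d i| := abs_sub _ _
        _ ≤ 1 / 2 ^ (n + 2) + 1 / 2 ^ (n + 3) := add_le_add e2 e1
        _ ≤ 1 / 2 ^ (n + 1) := (hsum3 n).le
    obtain ⟨z, hz1, hz2⟩ := REaux.geom_sound n
      (REaux.sval (REaux.pOf K n d) ((REaux.runA AM Av fo (REaux.pOf K n d) w d).get i))
      (xF i) ((REaux.valnum (s i) : ℝ) / 2 ^ n) hm1 hclose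
    -- membership in the enlarged interval
    rw [IvalHat]
    have ha : strVal (s i) = ((REaux.valnum (s i) : ℝ)) / 2 ^ n := by
      rw [REaux.strVal_eq, hleni]
    have hpow : (2:ℝ) ^ (-((s i).length : ℤ)) = 1 / 2 ^ n := by
      rw [hleni]; exact hzpow n
    refine ⟨xF i - z, Set.mem_Ico.2 ⟨?_, ?_⟩, Int.fract_sub_intCast (xF i) z⟩
    · rw [ha, hpow]; exact hz1
    · rw [ha, hpow]
      have : (2:ℝ) * (1 / 2 ^ n) = 2 / 2 ^ n := by ring
      rw [this]
      exact hz2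
end
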